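/- arXiv:1003.5025 — 3 statements merged into one kernel-verified Lean document; each statement's English description precedes it below -/
import Mathlib

section
/- Let T' be a theory in a first-order language L' and let M be a model of T' that is κ-saturated for some κ > |L'| + ℵ₀. Let (a⃗_i)_{i∈ω} be an indiscernible sequence of p-tuples from M, and let φ(x⃗,y⃗) be an L'-formula (x⃗ of length p, y⃗ of length q) such that M ⊨ ∃y⃗ φ(a⃗_i, y⃗) for some i ∈ ω. Then there is an indiscernible sequence (b⃗_i)_{i∈ω} of q-tuples from M such that M ⊨ φ(a⃗_i, b⃗_i) for every i ∈ ω. -/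
open FirstOrder FirstOrder.Language FirstOrder.Language.Structure Cardinal Set

namespace PaperDep

/-- The language with a single unary relation symbol `U`. -/
def unaryRelLang : FirstOrder.Language.{0, 0} :=
  ⟨fun _ => Empty, fun n => match n with | 1 => PUnit | _ => Empty⟩

/-- Interpreting the unary relation symbol `U` as membership in `B`. -/
def unaryRelStructure (M : Type*) (B : Set M) : unaryRelLang.Structure M where
  funMap := fun {_} f _ => Empty.elim f
  RelMap := fun {n} r x =>
    match n, r with
    | 1, _ => x 0 ∈ B
    | 0, r => Empty.elim r
    | (_ + 2), r => Empty.elim r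

/-- The language with a single unary function symbol `𝔣`. -/
def unaryFunLang : FirstOrder.Language.{0, 0} :=
  ⟨fun n => match n with | 1 => PUnit | _ => Empty, fun _ => Empty⟩

/-- Interpreting the unary function symbol `𝔣` as the function `F`. -/
def unaryFunStructure (M : Type*) (F : M → M) : unaryFunLang.Structure M where
  funMap := fun {n} f x =>
    match n, f with
    | 1, _ => F (x 0)
    | 0, f => Empty.elim f
    | (_ + 2), f => Empty.elim f
  RelMap := fun {_} r _ => Empty.elim r

/-- The language `L(U)`. -/
def LU (L : FirstOrder.Language.{0, 0}) : FirstOrder.Language.{0, 0} := L.sum unaryRelLang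

/-- The `L(U)`-structure on `M` given by an `L`-structure together with the
interpretation `B` of the predicate `U`. -/
def LUStructure (L : FirstOrder.Language.{0, 0}) (M : Type*) [L.Structure M] (B : Set M) :
    (LU L).Structure M :=
  letI := unaryRelStructure M B
  Language.sumStructure L unaryRelLang M

/-- The language `L(𝔣)`. -/
def LF (L : FirstOrder.Language.{0, 0}) : FirstOrder.Language.{0, 0} := L.sum unaryFunLang

/-- The `L(𝔣)`-structure on `M` given by an `L`-structure together with the
interpretation `F` of the function symbol `𝔣`. -/
def LFStructure (L : FirstOrder.Language.{0, 0}) (M : Type*) [L.Structure M] (F : M → M) :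
    (LF L).Structure M :=
  letI := unaryFunStructure M F
  Language.sumStructure L unaryFunLang M

/-- `(a⃗ᵢ)_{i ∈ ω}` is an indiscernible sequence of `p`-tuples from `M`. -/
def IsIndiscernible (L : FirstOrder.Language) {M : Type*} [L.Structure M] {p : ℕ}
    (a : ℕ → Fin p → M) : Prop :=
  ∀ (k : ℕ) (φ : L.Formula (Fin k × Fin p)) (i j : Fin k → ℕ),
    StrictMono i → StrictMono j →
      (φ.Realize (fun v => a (i v.1) v.2) ↔ φ.Realize (fun v => a (j v.1) v.2))

/-- `(a⃗ᵢ)_{i ∈ ω}` is an indiscernible sequence of `p`-tuples over the tuple `b⃗`. -/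
def IsIndiscernibleOver (L : FirstOrder.Language) {M : Type*} [L.Structure M] {p q : ℕ}
    (a : ℕ → Fin p → M) (b : Fin q → M) : Prop :=
  ∀ (k : ℕ) (φ : L.Formula ((Fin k × Fin p) ⊕ Fin q)) (i j : Fin k → ℕ),
    StrictMono i → StrictMono j →
      (φ.Realize (Sum.elim (fun v => a (i v.1) v.2) b) ↔
        φ.Realize (Sum.elim (fun v => a (j v.1) v.2) b))

/-- A theory is dependent (NIP) if in every model, every formula `φ(x⃗,y⃗)`, every
indiscernible sequence `(a⃗ᵢ)` and parameter tuple `b⃗` yield a finite or cofinite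
set `{i : φ(a⃗ᵢ, b⃗)}`. -/
def Dependent {L : FirstOrder.Language.{0, 0}} (T : L.Theory) : Prop :=
  ∀ (M : Type) [L.Structure M], T.Model M →
    ∀ (p q : ℕ) (φ : L.Formula (Fin p ⊕ Fin q)) (a : ℕ → Fin p → M) (b : Fin q → M),
      IsIndiscernible L a →
        ({i : ℕ | φ.Realize (Sum.elim (a i) b)}.Finite ∨
          {i : ℕ | ¬ φ.Realize (Sum.elim (a i) b)}.Finite)

/-- `M` is `κ`-saturated: every finitely satisfiable set of formulas with parameters from
a subset of `M` of size `< κ` and with fewer than `κ` free variables is realized in `M`. -/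
def IsSaturated (L : FirstOrder.Language.{0, 0}) (M : Type) [L.Structure M]
    (κ : Cardinal.{0}) : Prop :=
  ∀ (α : Type), #α < κ → ∀ A : Set M, #A < κ →
    ∀ S : Set (L.Formula (α ⊕ A)),
      (∀ s : Finset (L.Formula (α ⊕ A)), ↑s ⊆ S →
        ∃ v : α → M, ∀ φ ∈ s, φ.Realize (Sum.elim v (Subtype.val : A → M))) →
      ∃ v : α → M, ∀ φ ∈ S, φ.Realize (Sum.elim v (Subtype.val : A → M))

/-- The definable closure of `X` in `M` (with respect to the language `L`):
the set of elements that are the unique realization of some `L`-formula with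
parameters from `X`. -/
def dclIn (L : FirstOrder.Language) (M : Type*) [L.Structure M] (X : Set M) : Set M :=
  {a | ∃ φ : L.Formula (X ⊕ Fin 1),
    φ.Realize (Sum.elim (Subtype.val : X → M) fun _ => a) ∧
      ∀ b : M, φ.Realize (Sum.elim (Subtype.val : X → M) fun _ => b) → b = a}

end PaperDep
namespace PaperDep

/-- A set is "interval-like" if it is an open interval, possibly with infinite endpoints. -/
def IsIntervalLike {M : Type*} [LinearOrder M] (u : Set M) : Prop :=
  (∃ a b : M, u = Set.Ioo a b) ∨ (∃ a : M, u = Set.Iio a) ∨ (∃ a : M, u = Set.Ioi a) ∨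
    u = Set.univ

/-- `s` is a finite union of points and open intervals. -/
def FinUnionPtsIntervals {M : Type*} [LinearOrder M] (s : Set M) : Prop :=
  ∃ (n : ℕ) (f : Fin n → Set M),
    (∀ i, (∃ a : M, f i = {a}) ∨ IsIntervalLike (f i)) ∧ s = ⋃ i, f i

/-- `s` is a finite union of open intervals. -/
def FinUnionIntervals {M : Type*} [LinearOrder M] (s : Set M) : Prop :=
  ∃ (n : ℕ) (f : Fin n → Set M), (∀ i, IsIntervalLike (f i)) ∧ s = ⋃ i, f i

/-- `s` is open in the order topology. -/
def OrderOpen {M : Type*} [LinearOrder M] (s : Set M) : Prop :=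
  ∀ x ∈ s, ∃ u : Set M, IsIntervalLike u ∧ x ∈ u ∧ u ⊆ s

/-- The distinguished order symbol of `L` is interpreted as the order of `M`. -/
def OrdCompat (L : FirstOrder.Language) [L.IsOrdered] (M : Type*) [L.Structure M] [LE M] :
    Prop :=
  ∀ x y : M, Structure.RelMap (leSymb : L.Relations 2) ![x, y] ↔ x ≤ y

/-- The linearly ordered `L`-structure `M` is o-minimal: every subset of `M` definable with
parameters is a finite union of points and open intervals. -/
def OMinimalStructure (L : FirstOrder.Language) (M : Type*) [L.Structure M] [LinearOrder M] :
    Prop :=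
  ∀ s : Set M, (Set.univ : Set M).Definable₁ L s → FinUnionPtsIntervals s

/-- The theory `T` (in an ordered language) is o-minimal: every model (with its linear order,
compatible with the order symbol of `L`) is o-minimal. -/
def OMinimalTheory (L : FirstOrder.Language.{0, 0}) [L.IsOrdered] (T : L.Theory) : Prop :=
  ∀ (M : Type) [L.Structure M] [LinearOrder M], OrdCompat L M → T.Model M →
    OMinimalStructure L M

/-- The theory `T` has quantifier elimination. -/
def HasQE {L : FirstOrder.Language} (T : L.Theory) : Prop :=
  ∀ (n : ℕ) (φ : L.Formula (Fin n)),
    ∃ ψ : L.Formula (Fin n), ψ.IsQF ∧ (φ ⇔[T] ψ)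

/-- The theory `T` has a universal axiomatization. -/
def HasUnivAx {L : FirstOrder.Language.{0, 0}} (T : L.Theory) : Prop :=
  ∃ T₀ : L.Theory, T₀.IsUniversal ∧ ∀ (M : Type) [L.Structure M], T.Model M ↔ T₀.Model M

/-- `L`-terms naming the operations of an (ordered) abelian group with a distinguished
element `1`. -/
structure AbGroupOps (L : FirstOrder.Language) where
  add : L.Term (Fin 2)
  neg : L.Term (Fin 1)
  zero : L.Term (Fin 0)
  one : L.Term (Fin 0)

/-- The terms of `ops` are interpreted in `M` as the group operations, and `1` is positive. -/
def AbGroupOps.Compat {L : FirstOrder.Language} (ops : AbGroupOps L) (M : Type*)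
    [L.Structure M] [AddCommGroup M] [LinearOrder M] [IsOrderedAddMonoid M] : Prop :=
  (∀ x y : M, ops.add.realize ![x, y] = x + y) ∧
    (∀ x : M, ops.neg.realize ![x] = -x) ∧
    ops.zero.realize (fun i : Fin 0 => i.elim0 : Fin 0 → M) = 0 ∧
    0 < ops.one.realize (fun i : Fin 0 => i.elim0 : Fin 0 → M)

/-- `L`-terms naming the operations of an ordered ring. -/
structure RingOps (L : FirstOrder.Language) where
  add : L.Term (Fin 2)
  mul : L.Term (Fin 2)
  neg : L.Term (Fin 1)
  zero : L.Term (Fin 0)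
  one : L.Term (Fin 0)

/-- The terms of `ops` are interpreted in `M` as the ring operations. -/
def RingOps.Compat {L : FirstOrder.Language} (ops : RingOps L) (M : Type*)
    [L.Structure M] [Field M] [LinearOrder M] [IsStrictOrderedRing M] : Prop :=
  (∀ x y : M, ops.add.realize ![x, y] = x + y) ∧
    (∀ x y : M, ops.mul.realize ![x, y] = x * y) ∧
    (∀ x : M, ops.neg.realize ![x] = -x) ∧
    ops.zero.realize (fun i : Fin 0 => i.elim0 : Fin 0 → M) = 0 ∧
    ops.one.realize (fun i : Fin 0 => i.elim0 : Fin 0 → M) = 1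

/-- An ordered field is real closed: nonnegative elements are squares and odd-degree
polynomials have roots. -/
def RealClosed (M : Type*) [Field M] [LinearOrder M] [IsStrictOrderedRing M] : Prop :=
  (∀ x : M, 0 ≤ x → ∃ y : M, y ^ 2 = x) ∧
    ∀ p : Polynomial M, Odd p.natDegree → ∃ x : M, p.eval x = 0

/-- `T` extends the theory of real closed ordered fields: in every model, the distinguished
symbols define the structure of a real closed ordered field. -/
def ExtendsRCF (L : FirstOrder.Language.{0, 0}) [L.IsOrdered] (ops : RingOps L)
    (T : L.Theory) : Prop :=
  ∀ (M : Type) [L.Structure M], T.Model M → Nonempty M →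
    ∃ (fld : Field M) (ord : LinearOrder M),
      letI := fld
      letI := ord
      ∃ _ : IsStrictOrderedRing M,
      OrdCompat L M ∧ ops.Compat M ∧ RealClosed M

/-- `T` extends the theory of ordered abelian groups with a distinguished positive
element `1`. -/
def ExtendsOAG (L : FirstOrder.Language.{0, 0}) [L.IsOrdered] (ops : AbGroupOps L)
    (T : L.Theory) : Prop :=
  ∀ (M : Type) [L.Structure M], T.Model M → Nonempty M →
    ∃ (grp : AddCommGroup M) (ord : LinearOrder M),
      letI := grp
      letI := ord
      ∃ _ : IsOrderedAddMonoid M,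
      OrdCompat L M ∧ ops.Compat M

/-- `V` is a `T`-convex subring of the elementary substructure of `D` with underlying set `S`:
a convex subring closed under all continuous `L`-∅-definable unary functions. -/
def IsTConvexSubring (L : FirstOrder.Language) {D : Type*} [L.Structure D]
    [Field D] [LinearOrder D] [IsStrictOrderedRing D] (S V : Set D) : Prop :=
  V ⊆ S ∧ (0 : D) ∈ V ∧ (1 : D) ∈ V ∧
    (∀ x ∈ V, ∀ y ∈ V, x + y ∈ V) ∧ (∀ x ∈ V, ∀ y ∈ V, x * y ∈ V) ∧ (∀ x ∈ V, -x ∈ V) ∧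
    (∀ x ∈ V, ∀ z ∈ V, ∀ y ∈ S, x ≤ y → y ≤ z → y ∈ V) ∧
    ∀ F : D → D,
      (∃ φ : L.Formula (Fin 2), ∀ x y : D, F x = y ↔ φ.Realize ![x, y]) →
      (∀ x ∈ S, F x ∈ S) →
      (∀ x ∈ S, ∀ ε ∈ S, 0 < ε → ∃ δ ∈ S, 0 < δ ∧ ∀ y ∈ S, |y - x| < δ → |F y - F x| < ε) →
      ∀ x ∈ V, F x ∈ V

/-- The maximal ideal (set of nonunits) of the convex subring `V`. -/
def maxIdealIn {D : Type*} [Field D] [LinearOrder D] [IsStrictOrderedRing D] (V : Set D) : Set D :=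
  {x ∈ V | x = 0 ∨ x⁻¹ ∉ V}

open Classical in
/-- Rational powers in an ordered field: `qpow c q` is the unique positive `y` with
`y ^ q.den = c ^ q.num`, when it exists (and `0` otherwise). -/
noncomputable def qpow {A : Type*} [Field A] [LinearOrder A] [IsStrictOrderedRing A] (c : A) (q : ℚ) : A :=
  if h : ∃ y : A, 0 < y ∧ y ^ (q.den : ℕ) = c ^ (q.num : ℤ) then h.choose else 0

/-- Boolean combinations of sets from the collection `G`. -/
inductive BoolComb {α : Type*} (G : Set (Set α)) : Set α → Prop
  | basic {s : Set α} : s ∈ G → BoolComb G s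
  | compl {s : Set α} : BoolComb G s → BoolComb G sᶜ
  | union {s t : Set α} : BoolComb G s → BoolComb G t → BoolComb G (s ∪ t)

end PaperDep
namespace PaperDep

/-- The language of ordered rings `{<, +, -, ·, 0, 1}`: constants `0, 1` (`Fin 2`),
a unary function `-`, binary functions `+, ·` (`Fin 2`), and a binary relation `<`. -/
def oRingLang : FirstOrder.Language.{0, 0} :=
  ⟨fun n => match n with | 0 => Fin 2 | 1 => PUnit | 2 => Fin 2 | _ => Empty,
    fun n => match n with | 2 => PUnit | _ => Empty⟩

/-- The standard interpretation of the language of ordered rings in `ℝ`. -/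
def oRingStructureR : oRingLang.Structure ℝ where
  funMap := fun {n} f x =>
    match n, f with
    | 0, f => ![(0 : ℝ), 1] f
    | 1, _ => -(x 0)
    | 2, f => ![x 0 + x 1, x 0 * x 1] f
    | (_ + 3), f => Empty.elim f
  RelMap := fun {n} r x =>
    match n, r with
    | 2, _ => x 0 < x 1
    | 0, r => Empty.elim r
    | 1, r => Empty.elim r
    | (_ + 3), r => Empty.elim r

/-- `F : M → M` is definable (with parameters) in the `L`-structure `M`. -/
def DefinableFun (L : FirstOrder.Language) (M : Type*) [L.Structure M] (F : M → M) : Prop :=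
  (Set.univ : Set M).Definable L {x : Fin 2 → M | F (x 0) = x 1}

/-- The `L`-structure `ℝ` is polynomially bounded. -/
def PolyBounded (L : FirstOrder.Language) [L.Structure ℝ] : Prop :=
  ∀ F : ℝ → ℝ, DefinableFun L ℝ F → ∃ (n : ℕ) (x₀ : ℝ), ∀ x : ℝ, x₀ ≤ x → |F x| ≤ x ^ n

/-- The `L`-structure `ℝ` has field of exponents `ℚ`. -/
def FieldOfExpQ (L : FirstOrder.Language) [L.Structure ℝ] : Prop :=
  ∀ F : ℝ → ℝ, DefinableFun L ℝ F →
    (∀ x y : ℝ, 0 < x → 0 < y → F (x * y) = F x * F y) →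
    ∃ q : ℚ, ∀ x : ℝ, 0 < x → F x = x ^ (q : ℝ)

open Classical in
/-- `lam x` is the unique `g ∈ 2^ℤ` with `g ≤ x < 2g` for `x > 0`, and `0` for `x ≤ 0`. -/
noncomputable def lam : ℝ → ℝ := fun x =>
  if h : ∃ k : ℤ, (2 : ℝ) ^ k ≤ x ∧ x < 2 * (2 : ℝ) ^ k then (2 : ℝ) ^ h.choose else 0

/-- The pure closure `H_G⟨g₁, …, g_m⟩` of the subgroup `H` together with `g₁, …, g_m`
inside the (multiplicatively written, torsion-free abelian) group `G`. -/
def pureClosure {A : Type*} [Field A] [LinearOrder A] [IsStrictOrderedRing A] (G H : Set A) {m : ℕ}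
    (g : Fin m → A) : Set A :=
  {x ∈ G | ∃ M₀ : ℕ, 0 < M₀ ∧ ∃ h ∈ H, ∃ k : Fin m → ℤ,
    x ^ M₀ = h * ∏ i, g i ^ k i}

end PaperDep

namespace PaperDep



private lemma bool_pigeonhole (t : ℕ → Bool) : ∃ c, {n : ℕ | t n = c}.Infinite := by
  by_contra h
  push_neg at h
  have h1 : {n : ℕ | t n = true}.Finite := h true
  have h2 : {n : ℕ | t n = false}.Finite := h false
  have huniv : (Set.univ : Set ℕ) = {n | t n = true} ∪ {n | t n = false} := by
    ext n; simp only [Set.mem_univ, Set.mem_union, Set.mem_setOf_eq, true_iff]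
    cases t n <;> simp
  exact Set.infinite_univ (huniv ▸ (h1.union h2))

/-- The infinite Ramsey theorem for `ℕ`, colorings of strictly increasing tuples. -/
lemma ramseyNat : ∀ (k : ℕ) (C : (Fin k → ℕ) → Bool) (S : Set ℕ), S.Infinite →
    ∃ H, H ⊆ S ∧ H.Infinite ∧ ∃ t, ∀ f : Fin k → ℕ, StrictMono f →
      (∀ m, f m ∈ H) → C f = t := by
  intro k
  induction k with
  | zero =>
    intro C S hS
    exact ⟨S, le_refl _, hS, C default, fun f _ _ => by rw [Subsingleton.elim f default]⟩
  | succ k IH =>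
    intro C S hS
    choose Hf hsub hinf tf hhom using IH
    let P := {s : Set ℕ // s.Infinite}
    let pick : P → ℕ := fun s => s.2.nonempty.some
    have pick_mem : ∀ s : P, pick s ∈ s.1 := fun s => s.2.nonempty.some_mem
    let col : ℕ → (Fin k → ℕ) → Bool := fun x f => C (Fin.cons x f)
    let nxt : P → P := fun s =>
      ⟨Hf (col (pick s)) (s.1 \ Set.Iic (pick s)) (s.2.diff (Set.finite_Iic _)),
        hinf _ _ _⟩
    let seq : ℕ → P := fun n => nxt^[n] ⟨S, hS⟩
    have seq_succ : ∀ n, seq (n + 1) = nxt (seq n) := fun n =>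
      Function.iterate_succ_apply' nxt n _
    let av : ℕ → ℕ := fun n => pick (seq n)
    let tv : ℕ → Bool := fun n =>
      tf (col (av n)) ((seq n).1 \ Set.Iic (av n)) ((seq n).2.diff (Set.finite_Iic _))
    have step_sub : ∀ n, (seq (n + 1)).1 ⊆ (seq n).1 \ Set.Iic (av n) := by
      intro n; rw [seq_succ]; exact hsub _ _ _
    have mono : ∀ n m, n ≤ m → (seq m).1 ⊆ (seq n).1 := by
      intro n m hnm
      induction m, hnm using Nat.le_induction with
      | base => exact subset_rfl
      | succ m hnm ih => exact ((step_sub m).trans Set.diff_subset).trans ih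
    have memav : ∀ n, av n ∈ (seq n).1 := fun n => pick_mem _
    have hav : ∀ n m, n < m → av m ∈ (seq (n + 1)).1 :=
      fun n m hnm => mono (n + 1) m hnm (memav m)
    have hlt : ∀ n m, n < m → av n < av m := by
      intro n m hnm
      have := step_sub n (hav n m hnm)
      simpa using this.2
    have hstrict : StrictMono av := fun n m hnm => hlt n m hnm
    obtain ⟨cI, hI⟩ := bool_pigeonhole tv
    refine ⟨av '' {n | tv n = cI}, ?_, hI.image (hstrict.injective.injOn), cI, ?_⟩
    · rintro x ⟨n, _, rfl⟩
      exact mono 0 n (Nat.zero_le n) (memav n)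
    · intro f hf hfH
      choose nn hnI hna using fun m => hfH m
      have hnlt : ∀ m m' : Fin (k + 1), m < m' → nn m < nn m' := by
        intro m m' hmm'
        have : av (nn m) < av (nn m') := by rw [hna, hna]; exact hf hmm'
        exact (hstrict.lt_iff_lt).1 this
      -- homogeneous set at stage nn 0
      have htail : StrictMono (Fin.tail f) := by
        intro i j hij
        exact hf (Fin.succ_lt_succ_iff.2 hij)
      have htailmem : ∀ m, Fin.tail f m ∈
          Hf (col (av (nn 0))) ((seq (nn 0)).1 \ Set.Iic (av (nn 0)))
            ((seq (nn 0)).2.diff (Set.finite_Iic _)) := by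
        intro m
        have h0 : nn 0 < nn m.succ := hnlt 0 m.succ (Fin.succ_pos m)
        have := hav (nn 0) (nn m.succ) h0
        rw [seq_succ] at this
        show f m.succ ∈ _
        rw [← hna m.succ]
        exact this
      have hcol : col (av (nn 0)) (Fin.tail f) = tv (nn 0) :=
        hhom _ _ _ (Fin.tail f) htail htailmem
      have hf0 : f 0 = av (nn 0) := (hna 0).symm
      calc C f = C (Fin.cons (f 0) (Fin.tail f)) := by rw [Fin.cons_self_tail]
        _ = col (av (nn 0)) (Fin.tail f) := by rw [hf0]
        _ = cI := by rw [hcol]; exact hnI 0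

/-- Simultaneous homogeneity for a finite list of colorings (of varying arities). -/
lemma multiRamsey : ∀ (l : List (Σ k : ℕ, (Fin k → ℕ) → Bool)) (S : Set ℕ), S.Infinite →
    ∃ H, H ⊆ S ∧ H.Infinite ∧ ∀ e ∈ l, ∀ f g : Fin e.1 → ℕ, StrictMono f → StrictMono g →
      (∀ m, f m ∈ H) → (∀ m, g m ∈ H) → e.2 f = e.2 g := by
  intro l
  induction l with
  | nil => exact fun S hS => ⟨S, subset_rfl, hS, by simp⟩
  | cons e l IH =>
    intro S hS
    obtain ⟨H, hHS, hHinf, hhom⟩ := IH S hS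
    obtain ⟨H', hH'H, hH'inf, t, ht⟩ := ramseyNat e.1 e.2 H hHinf
    refine ⟨H', hH'H.trans hHS, hH'inf, ?_⟩
    intro e' he'
    rcases List.mem_cons.1 he' with rfl | he'
    · exact fun f g hf hg hfH hgH => (ht f hf hfH).trans (ht g hg hgH).symm
    · exact fun f g hf hg hfH hgH =>
        hhom e' he' f g hf hg (fun m => hH'H (hfH m)) (fun m => hH'H (hgH m))

lemma realize_foldr_inf {L : FirstOrder.Language.{0, 0}} {M : Type} [L.Structure M] {α : Type}
    (l : List (L.Formula α)) (v : α → M) :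
    (l.foldr (· ⊓ ·) ⊤).Realize v ↔ ∀ F ∈ l, F.Realize v := by
  induction l with
  | nil => simpa using Formula.realize_top
  | cons F l ih =>
    simp only [List.foldr_cons, List.mem_cons, Formula.realize_inf, ih]
    constructor
    · rintro ⟨h1, h2⟩ G (rfl | hG)
      · exact h1
      · exact h2 G hG
    · intro h
      exact ⟨h F (Or.inl rfl), fun G hG => h G (Or.inr hG)⟩


/-- Proposition 2.2 of "Dependent Pairs": in a sufficiently saturated model,
an indiscernible sequence `(a⃗ᵢ)` such that `∃ y⃗ φ(a⃗ᵢ, y⃗)` holds for some `i` can be completed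
to an indiscernible sequence of witnesses `(b⃗ᵢ)` with `φ(a⃗ᵢ, b⃗ᵢ)` for all `i`. -/
theorem statement_0 (L : FirstOrder.Language.{0, 0}) (T' : L.Theory)
    (M : Type) [L.Structure M] (hM : T'.Model M)
    (κ : Cardinal.{0}) (hκ : L.card + Cardinal.aleph0 < κ)
    (hsat : IsSaturated L M κ)
    (p q : ℕ) (a : ℕ → Fin p → M) (ha : IsIndiscernible L a)
    (φ : L.Formula (Fin p ⊕ Fin q))
    (hφ : ∃ (i : ℕ) (y : Fin q → M), φ.Realize (Sum.elim (a i) y)) :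
    ∃ b : ℕ → Fin q → M, IsIndiscernible L b ∧
      ∀ i : ℕ, φ.Realize (Sum.elim (a i) (b i)) := by
  classical
  have haleph : Cardinal.aleph0 < κ := lt_of_le_of_lt le_add_self hκ
  -- every `a i` has a witness
  have hex : ∀ i : ℕ, ∃ y : Fin q → M, φ.Realize (Sum.elim (a i) y) := by
    obtain ⟨i0, y0, hy0⟩ := hφ
    intro i
    have hmono1 : StrictMono (fun _ : Fin 1 => i0) := by
      intro x y hxy; rw [Subsingleton.elim x y] at hxy; exact absurd hxy (lt_irrefl y)
    have hmono2 : StrictMono (fun _ : Fin 1 => i) := by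
      intro x y hxy; rw [Subsingleton.elim x y] at hxy; exact absurd hxy (lt_irrefl y)
    have key : ∀ n : ℕ,
        (((φ.relabel (Sum.map (fun j : Fin p => ((0 : Fin 1), j)) (id : Fin q → Fin q))).iExs (Fin q)).Realize
          (fun u : Fin 1 × Fin p => a n u.2) ↔
          ∃ y : Fin q → M, φ.Realize (Sum.elim (a n) y)) := by
      intro n
      rw [Formula.realize_iExs]
      refine exists_congr fun y => Formula.realize_relabel.trans (iff_of_eq (congrArg _ ?_))
      funext x; cases x <;> rfl
    exact (key i).1 ((ha 1 _ (fun _ => i0) (fun _ => i) hmono1 hmono2).1 ((key i0).2 ⟨y0, hy0⟩))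
  choose c hc using hex
  set A : Set M := Set.range (fun x : ℕ × Fin p => a x.1 x.2) with hAdef
  have aMem : ∀ i j, a i j ∈ A := fun i j => ⟨(i, j), rfl⟩
  let gphi : ℕ → (Fin p ⊕ Fin q) → ((ℕ × Fin q) ⊕ A) := fun i =>
    Sum.elim (fun j => Sum.inr ⟨a i j, aMem i j⟩) (fun j => Sum.inl (i, j))
  let Phi : ℕ → L.Formula ((ℕ × Fin q) ⊕ A) := fun i => φ.relabel (gphi i)
  let gpsi : ∀ k : ℕ, (Fin k → ℕ) →
      ((Fin k × Fin p) ⊕ (Fin k × Fin q)) → ((ℕ × Fin q) ⊕ A) := fun k i =>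
    Sum.elim (fun u => Sum.inr ⟨a (i u.1) u.2, aMem _ _⟩) (fun u => Sum.inl (i u.1, u.2))
  let Psi : ∀ k : ℕ, L.Formula ((Fin k × Fin p) ⊕ (Fin k × Fin q)) →
      (Fin k → ℕ) → (Fin k → ℕ) → L.Formula ((ℕ × Fin q) ⊕ A) := fun k ψ i j =>
    (ψ.relabel (gpsi k i)).iff (ψ.relabel (gpsi k j))
  let SF : Set (L.Formula ((ℕ × Fin q) ⊕ A)) :=
    {F | (∃ i, F = Phi i) ∨ ∃ (k : ℕ) (ψ : L.Formula ((Fin k × Fin p) ⊕ (Fin k × Fin q)))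
      (i j : Fin k → ℕ), StrictMono i ∧ StrictMono j ∧ F = Psi k ψ i j}
  have realPhi : ∀ (i : ℕ) (v : ℕ × Fin q → M),
      (Phi i).Realize (Sum.elim v (Subtype.val : A → M)) ↔
        φ.Realize (Sum.elim (a i) (fun j => v (i, j))) := by
    intro i v
    refine (Formula.realize_relabel).trans (iff_of_eq (congrArg _ ?_))
    funext x; cases x <;> rfl
  have realPsi : ∀ (k : ℕ) (ψ : L.Formula ((Fin k × Fin p) ⊕ (Fin k × Fin q)))
      (i : Fin k → ℕ) (v : ℕ × Fin q → M),
      (ψ.relabel (gpsi k i)).Realize (Sum.elim v (Subtype.val : A → M)) ↔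
        ψ.Realize (Sum.elim (fun u : Fin k × Fin p => a (i u.1) u.2)
          (fun u : Fin k × Fin q => v (i u.1, u.2))) := by
    intro k ψ i v
    refine (Formula.realize_relabel).trans (iff_of_eq (congrArg _ ?_))
    funext x; cases x <;> rfl
  -- finite satisfiability
  have finsat : ∀ s : Finset (L.Formula ((ℕ × Fin q) ⊕ A)), ↑s ⊆ SF →
      ∃ v : ℕ × Fin q → M, ∀ F ∈ s, F.Realize (Sum.elim v (Subtype.val : A → M)) := by
    intro s hsS
    set s1 : Finset (L.Formula ((ℕ × Fin q) ⊕ A)) := s.filter (fun F => ∃ i, F = Phi i)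
      with hs1def
    set s2 : Finset (L.Formula ((ℕ × Fin q) ⊕ A)) := s.filter (fun F => ¬ ∃ i, F = Phi i)
      with hs2def
    have hdata1 : ∀ F : {F // F ∈ s1}, ∃ i, F.1 = Phi i :=
      fun F => (Finset.mem_filter.1 F.2).2
    have hdata2 : ∀ F : {F // F ∈ s2}, ∃ d : (Σ k : ℕ,
        L.Formula ((Fin k × Fin p) ⊕ (Fin k × Fin q)) × (Fin k → ℕ) × (Fin k → ℕ)),
        StrictMono d.2.2.1 ∧ StrictMono d.2.2.2 ∧ F.1 = Psi d.1 d.2.1 d.2.2.1 d.2.2.2 := by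
      intro F
      have hnP : ¬ ∃ i, F.1 = Phi i := (Finset.mem_filter.1 F.2).2
      have hmemS : (∃ i, F.1 = Phi i) ∨ ∃ (k : ℕ)
          (ψ : L.Formula ((Fin k × Fin p) ⊕ (Fin k × Fin q)))
          (i j : Fin k → ℕ), StrictMono i ∧ StrictMono j ∧ F.1 = Psi k ψ i j :=
        hsS (Finset.mem_filter.1 F.2).1
      rcases hmemS with hP | ⟨k, ψ, i, j, hsi, hsj, hF⟩
      · exact absurd hP hnP
      · exact ⟨⟨k, ψ, i, j⟩, hsi, hsj, hF⟩
    choose ix hix using hdata1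
    choose dat2 hsm1 hsm2 hint2 using hdata2
    have hbnd2 : ∀ F : {F // F ∈ s2}, ∃ B : ℕ,
        ∀ m, (dat2 F).2.2.1 m < B ∧ (dat2 F).2.2.2 m < B := by
      intro F
      refine ⟨(Finset.univ.sup fun m => max ((dat2 F).2.2.1 m) ((dat2 F).2.2.2 m)) + 1,
        fun m => ⟨?_, ?_⟩⟩
      · exact Nat.lt_succ_of_le ((le_max_left _ _).trans (Finset.le_sup
          (f := fun m => max ((dat2 F).2.2.1 m) ((dat2 F).2.2.2 m)) (Finset.mem_univ m)))
      · exact Nat.lt_succ_of_le ((le_max_right _ _).trans (Finset.le_sup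
          (f := fun m => max ((dat2 F).2.2.1 m) ((dat2 F).2.2.2 m)) (Finset.mem_univ m)))
    choose bnd2 hbnd2' using hbnd2
    set N : ℕ := (Finset.univ.sup fun F : {F // F ∈ s1} => ix F) +
      (Finset.univ.sup bnd2) + 1 with hNdef
    have hixN : ∀ F : {F // F ∈ s1}, ix F < N := by
      intro F
      have hle : ix F ≤ Finset.univ.sup (fun F : {F // F ∈ s1} => ix F) :=
        Finset.le_sup (Finset.mem_univ F)
      omega
    have hbN : ∀ (F : {F // F ∈ s2}) (m : Fin (dat2 F).1),
        (dat2 F).2.2.1 m < N ∧ (dat2 F).2.2.2 m < N := by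
      intro F m
      have h1 := hbnd2' F m
      have h2 : bnd2 F ≤ (Finset.univ.sup bnd2) := Finset.le_sup (Finset.mem_univ F)
      exact ⟨by omega, by omega⟩
    have hNpos : 0 < N := by omega
    let clip : ℕ → Fin N := fun n => ⟨n % N, Nat.mod_lt _ hNpos⟩
    have clip_val : ∀ n, n < N → ((clip n : Fin N) : ℕ) = n := fun n hn => Nat.mod_eq_of_lt hn
    -- templates
    let tau1 : {F // F ∈ s1} → L.Formula ((Fin N × Fin p) ⊕ (Fin N × Fin q)) := fun F =>
      φ.relabel (Sum.map (fun j : Fin p => (clip (ix F), j)) (fun j : Fin q => (clip (ix F), j)))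
    let tau2 : {F // F ∈ s2} → L.Formula ((Fin N × Fin p) ⊕ (Fin N × Fin q)) := fun F =>
      ((dat2 F).2.1.relabel (Sum.map
          (fun u : Fin (dat2 F).1 × Fin p => (clip ((dat2 F).2.2.1 u.1), u.2))
          (fun u : Fin (dat2 F).1 × Fin q => (clip ((dat2 F).2.2.1 u.1), u.2)))).iff
        ((dat2 F).2.1.relabel (Sum.map
          (fun u : Fin (dat2 F).1 × Fin p => (clip ((dat2 F).2.2.2 u.1), u.2))
          (fun u : Fin (dat2 F).1 × Fin q => (clip ((dat2 F).2.2.2 u.1), u.2))))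
    have realTau1 : ∀ (n : ℕ) (X : Fin N × Fin p → M) (Y : Fin N × Fin q → M),
        ((φ.relabel (Sum.map (fun j : Fin p => (clip n, j))
            (fun j : Fin q => (clip n, j)))).Realize (Sum.elim X Y)) ↔
          φ.Realize (Sum.elim (fun j => X (clip n, j)) (fun j => Y (clip n, j))) := by
      intro n X Y
      refine (Formula.realize_relabel).trans (iff_of_eq (congrArg _ ?_))
      funext x; cases x <;> rfl
    have realTau2 : ∀ (k : ℕ) (ψ : L.Formula ((Fin k × Fin p) ⊕ (Fin k × Fin q)))
        (i : Fin k → ℕ) (X : Fin N × Fin p → M) (Y : Fin N × Fin q → M),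
        ((ψ.relabel (Sum.map (fun u : Fin k × Fin p => (clip (i u.1), u.2))
            (fun u : Fin k × Fin q => (clip (i u.1), u.2)))).Realize (Sum.elim X Y)) ↔
          ψ.Realize (Sum.elim (fun u : Fin k × Fin p => X (clip (i u.1), u.2))
            (fun u : Fin k × Fin q => Y (clip (i u.1), u.2))) := by
      intro k ψ i X Y
      refine (Formula.realize_relabel).trans (iff_of_eq (congrArg _ ?_))
      funext x; cases x <;> rfl
    -- Ramsey
    let clist : List (Σ k : ℕ, (Fin k → ℕ) → Bool) :=
      (Finset.univ : Finset {F // F ∈ s2}).toList.map (fun F =>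
        ⟨(dat2 F).1, fun m => decide (((dat2 F).2.1).Realize
          (Sum.elim (fun u => a (m u.1) u.2) (fun u => c (m u.1) u.2)))⟩)
    obtain ⟨H, -, hHinf, hom⟩ := multiRamsey clist Set.univ Set.infinite_univ
    let h : ℕ → ℕ := Nat.nth (· ∈ H)
    have hhm : StrictMono h := Nat.nth_strictMono hHinf
    have hmemH : ∀ n, h n ∈ H := fun n => Nat.nth_mem_of_infinite hHinf n
    let conjList : List (L.Formula ((Fin N × Fin p) ⊕ (Fin N × Fin q))) :=
      ((Finset.univ : Finset {F // F ∈ s1}).toList.map tau1) ++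
        ((Finset.univ : Finset {F // F ∈ s2}).toList.map tau2)
    -- Step A: the witnesses `c (h _)` realize all templates along `h`
    have hA : ∀ F ∈ conjList, F.Realize
        (Sum.elim (fun u : Fin N × Fin p => a (h u.1.val) u.2)
          (fun u : Fin N × Fin q => c (h u.1.val) u.2)) := by
      intro F hF
      rcases List.mem_append.1 hF with hF1 | hF2
      · obtain ⟨F', -, rfl⟩ := List.mem_map.1 hF1
        refine (realTau1 (ix F') _ _).2 ?_
        have hcv : ((clip (ix F') : Fin N) : ℕ) = ix F' := clip_val _ (hixN F')
        show φ.Realize (Sum.elim (fun j => a (h ((clip (ix F') : Fin N) : ℕ)) j)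
          (fun j => c (h ((clip (ix F') : Fin N) : ℕ)) j))
        rw [hcv]
        exact hc (h (ix F'))
      · obtain ⟨F', -, rfl⟩ := List.mem_map.1 hF2
        refine Formula.realize_iff.2 ?_
        refine ((realTau2 _ _ _ _ _).trans (Iff.trans ?_ (realTau2 _ _ _ _ _).symm))
        have ei1 : (fun u : Fin (dat2 F').1 × Fin p =>
            a (h ((clip ((dat2 F').2.2.1 u.1) : Fin N) : ℕ)) u.2) =
            fun u => a (h ((dat2 F').2.2.1 u.1)) u.2 := by
          funext u; rw [clip_val _ ((hbN F' u.1).1)]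
        have ei2 : (fun u : Fin (dat2 F').1 × Fin q =>
            c (h ((clip ((dat2 F').2.2.1 u.1) : Fin N) : ℕ)) u.2) =
            fun u => c (h ((dat2 F').2.2.1 u.1)) u.2 := by
          funext u; rw [clip_val _ ((hbN F' u.1).1)]
        have ej1 : (fun u : Fin (dat2 F').1 × Fin p =>
            a (h ((clip ((dat2 F').2.2.2 u.1) : Fin N) : ℕ)) u.2) =
            fun u => a (h ((dat2 F').2.2.2 u.1)) u.2 := by
          funext u; rw [clip_val _ ((hbN F' u.1).2)]
        have ej2 : (fun u : Fin (dat2 F').1 × Fin q =>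
            c (h ((clip ((dat2 F').2.2.2 u.1) : Fin N) : ℕ)) u.2) =
            fun u => c (h ((dat2 F').2.2.2 u.1)) u.2 := by
          funext u; rw [clip_val _ ((hbN F' u.1).2)]
        show ((dat2 F').2.1.Realize (Sum.elim
            (fun u : Fin (dat2 F').1 × Fin p =>
              a (h ((clip ((dat2 F').2.2.1 u.1) : Fin N) : ℕ)) u.2)
            (fun u : Fin (dat2 F').1 × Fin q =>
              c (h ((clip ((dat2 F').2.2.1 u.1) : Fin N) : ℕ)) u.2))) ↔
          ((dat2 F').2.1.Realize (Sum.elim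
            (fun u : Fin (dat2 F').1 × Fin p =>
              a (h ((clip ((dat2 F').2.2.2 u.1) : Fin N) : ℕ)) u.2)
            (fun u : Fin (dat2 F').1 × Fin q =>
              c (h ((clip ((dat2 F').2.2.2 u.1) : Fin N) : ℕ)) u.2)))
        rw [ei1, ei2, ej1, ej2]
        have hcolmem : (⟨(dat2 F').1, fun m => decide (((dat2 F').2.1).Realize
            (Sum.elim (fun u => a (m u.1) u.2) (fun u => c (m u.1) u.2)))⟩ :
              Σ k : ℕ, (Fin k → ℕ) → Bool) ∈ clist :=
          List.mem_map.2 ⟨F', Finset.mem_toList.2 (Finset.mem_univ F'), rfl⟩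
        have hde := hom _ hcolmem (fun l => h ((dat2 F').2.2.1 l))
          (fun l => h ((dat2 F').2.2.2 l))
          (hhm.comp (hsm1 F')) (hhm.comp (hsm2 F'))
          (fun l => hmemH _) (fun l => hmemH _)
        exact decide_eq_decide.1 hde
    -- Step A': transfer along the indiscernibility of `a`
    have m1 : StrictMono (fun l : Fin N => h l.val) := fun x y hxy => hhm hxy
    have m2 : StrictMono (fun l : Fin N => (l.val : ℕ)) := fun _ _ hxy => hxy
    have hstep1 : ((conjList.foldr (· ⊓ ·) ⊤).iExs
        (Fin N × Fin q)).Realize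
        (fun u : Fin N × Fin p => a (h u.1.val) u.2) := by
      rw [Formula.realize_iExs]
      exact ⟨fun u : Fin N × Fin q => c (h u.1.val) u.2, (realize_foldr_inf conjList _).2 hA⟩
    have hTheta0 : ((conjList.foldr (· ⊓ ·) ⊤).iExs
        (Fin N × Fin q)).Realize
        (fun u : Fin N × Fin p => a u.1.val u.2) :=
      (ha N _ (fun l : Fin N => h l.val) (fun l : Fin N => (l.val : ℕ)) m1 m2).1 hstep1
    rw [Formula.realize_iExs] at hTheta0
    obtain ⟨w, hw⟩ := hTheta0
    have hw' : ∀ F ∈ conjList, F.Realize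
        (Sum.elim (fun u : Fin N × Fin p => a u.1.val u.2) w) :=
      (realize_foldr_inf conjList _).1 hw
    refine ⟨fun u : ℕ × Fin q => w (clip u.1, u.2), ?_⟩
    intro F hF
    by_cases hP : ∃ i, F = Phi i
    · have hF1 : F ∈ s1 := Finset.mem_filter.2 ⟨hF, hP⟩
      have hFeq : F = Phi (ix ⟨F, hF1⟩) := hix ⟨F, hF1⟩
      rw [hFeq]
      refine (realPhi _ _).2 ?_
      have h2 : φ.Realize (Sum.elim
          (fun m => a ((clip (ix ⟨F, hF1⟩) : Fin N) : ℕ) m)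
          (fun m => w (clip (ix ⟨F, hF1⟩), m))) :=
        (realTau1 (ix ⟨F, hF1⟩) _ _).1 (hw' (tau1 ⟨F, hF1⟩)
          (List.mem_append.2 (Or.inl (List.mem_map.2
            ⟨⟨F, hF1⟩, Finset.mem_toList.2 (Finset.mem_univ _), rfl⟩))))
      rw [clip_val _ (hixN ⟨F, hF1⟩)] at h2
      exact h2
    · have hF2 : F ∈ s2 := Finset.mem_filter.2 ⟨hF, hP⟩
      have hFeq : F = Psi (dat2 ⟨F, hF2⟩).1 (dat2 ⟨F, hF2⟩).2.1 (dat2 ⟨F, hF2⟩).2.2.1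
          (dat2 ⟨F, hF2⟩).2.2.2 := hint2 ⟨F, hF2⟩
      rw [hFeq]
      refine Formula.realize_iff.2 ?_
      refine (realPsi _ _ _ _).trans (Iff.trans ?_ (realPsi _ _ _ _).symm)
      have h3 := hw' (tau2 ⟨F, hF2⟩)
        (List.mem_append.2 (Or.inr (List.mem_map.2
          ⟨⟨F, hF2⟩, Finset.mem_toList.2 (Finset.mem_univ _), rfl⟩)))
      have h4 := Formula.realize_iff.1 h3
      have h5 : ((dat2 ⟨F, hF2⟩).2.1.Realize (Sum.elim
          (fun u : Fin (dat2 ⟨F, hF2⟩).1 × Fin p =>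
            a ((clip ((dat2 ⟨F, hF2⟩).2.2.1 u.1) : Fin N) : ℕ) u.2)
          (fun u : Fin (dat2 ⟨F, hF2⟩).1 × Fin q =>
            w (clip ((dat2 ⟨F, hF2⟩).2.2.1 u.1), u.2)))) ↔
          ((dat2 ⟨F, hF2⟩).2.1.Realize (Sum.elim
          (fun u : Fin (dat2 ⟨F, hF2⟩).1 × Fin p =>
            a ((clip ((dat2 ⟨F, hF2⟩).2.2.2 u.1) : Fin N) : ℕ) u.2)
          (fun u : Fin (dat2 ⟨F, hF2⟩).1 × Fin q =>
            w (clip ((dat2 ⟨F, hF2⟩).2.2.2 u.1), u.2)))) :=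
        (realTau2 _ _ _ _ _).symm.trans (h4.trans (realTau2 _ _ _ _ _))
      have ei1 : (fun u : Fin (dat2 ⟨F, hF2⟩).1 × Fin p =>
          a ((clip ((dat2 ⟨F, hF2⟩).2.2.1 u.1) : Fin N) : ℕ) u.2) =
          fun u => a ((dat2 ⟨F, hF2⟩).2.2.1 u.1) u.2 := by
        funext u; rw [clip_val _ ((hbN ⟨F, hF2⟩ u.1).1)]
      have ej1 : (fun u : Fin (dat2 ⟨F, hF2⟩).1 × Fin p =>
          a ((clip ((dat2 ⟨F, hF2⟩).2.2.2 u.1) : Fin N) : ℕ) u.2) =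
          fun u => a ((dat2 ⟨F, hF2⟩).2.2.2 u.1) u.2 := by
        funext u; rw [clip_val _ ((hbN ⟨F, hF2⟩ u.1).2)]
      rw [ei1, ej1] at h5
      exact h5
  -- saturation
  have card1 : #(ℕ × Fin q) < κ := lt_of_le_of_lt Cardinal.mk_le_aleph0 haleph
  have hAc : A.Countable := Set.countable_range _
  haveI := hAc.to_subtype
  have card2 : #A < κ := lt_of_le_of_lt Cardinal.mk_le_aleph0 haleph
  obtain ⟨v, hv⟩ := hsat (ℕ × Fin q) card1 A card2 SF finsat
  refine ⟨fun i m => v (i, m), ?_, ?_⟩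
  · intro k ψ' i j hi hj
    have hmemS : Psi k (ψ'.relabel Sum.inr) i j ∈ SF :=
      Or.inr ⟨k, ψ'.relabel Sum.inr, i, j, hi, hj, rfl⟩
    have h6 := hv _ hmemS
    have h7 := Formula.realize_iff.1 h6
    have h8 := (realPsi k (ψ'.relabel Sum.inr) i v).symm.trans
      (h7.trans (realPsi k (ψ'.relabel Sum.inr) j v))
    have h9a : ((ψ'.relabel (Sum.inr : (Fin k × Fin q) →
        (Fin k × Fin p) ⊕ (Fin k × Fin q))).Realize
        (Sum.elim (fun u : Fin k × Fin p => a (i u.1) u.2)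
          (fun u : Fin k × Fin q => v (i u.1, u.2)))) ↔
        ψ'.Realize ((Sum.elim (fun u : Fin k × Fin p => a (i u.1) u.2)
          (fun u : Fin k × Fin q => v (i u.1, u.2))) ∘ Sum.inr) :=
      Formula.realize_relabel
    have h9b : ((ψ'.relabel (Sum.inr : (Fin k × Fin q) →
        (Fin k × Fin p) ⊕ (Fin k × Fin q))).Realize
        (Sum.elim (fun u : Fin k × Fin p => a (j u.1) u.2)
          (fun u : Fin k × Fin q => v (j u.1, u.2)))) ↔
        ψ'.Realize ((Sum.elim (fun u : Fin k × Fin p => a (j u.1) u.2)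
          (fun u : Fin k × Fin q => v (j u.1, u.2))) ∘ Sum.inr) :=
      Formula.realize_relabel
    exact (h9a.symm.trans (h8.trans h9b))
  · intro i
    have h10 := hv (Phi i) (Or.inl ⟨i, rfl⟩)
    exact (realPhi i v).1 h10

end PaperDep
end

section
/- Let T' be a theory in a first-order language L' and let M be a model of T' that is κ-saturated for some κ > |L'| + ℵ₀. Let (a⃗_i)_{i∈ω} be an indiscernible sequence of p-tuples from M, let b⃗ ∈ M^q, and let ψ(x⃗,y⃗) be an L'-formula such that both {i ∈ ω : M ⊨ ψ(a⃗_i, b⃗)} and {i ∈ ω : M ⊨ ¬ψ(a⃗_i, b⃗)} are infinite. Then there is a sequence (c⃗_i)_{i∈ω} of p-tuples from M such that: (1) the subsequence (c⃗_{2i})_{i∈ω} is indiscernible over b⃗; (2) M ⊨ ψ(c⃗_i, b⃗) if and only if i is even; and (3) for every k and every L'-formula φ in k·p free variables, M ⊨ φ(c⃗_0,…,c⃗_{k−1}) if and only if M ⊨ φ(a⃗_0,…,a⃗_{k−1}). -/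
open FirstOrder FirstOrder.Language FirstOrder.Language.Structure Cardinal Set

namespace PaperDep

private theorem ramsey : ∀ (r : ℕ) (C : (Fin r → ℕ) → Bool) (P : Set ℕ), P.Infinite →
    ∃ H, H ⊆ P ∧ H.Infinite ∧ ∃ col : Bool,
      ∀ f : Fin r → ℕ, StrictMono f → (∀ t, f t ∈ H) → C f = col := by
  intro r
  induction r with
  | zero =>
    intro C P hP
    refine ⟨P, subset_rfl, hP, C (fun t => t.elim0), fun f _ _ => ?_⟩
    congr 1; funext t; exact t.elim0
  | succ r ih =>
    intro C P hP
    have step : ∀ S : {S : Set ℕ // S.Infinite},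
        ∃ (x : ℕ) (S' : {T : Set ℕ // T.Infinite}) (c : Bool),
          x ∈ S.1 ∧ S'.1 ⊆ S.1 ∧ (∀ y ∈ S'.1, x < y) ∧
          ∀ g : Fin r → ℕ, StrictMono g → (∀ t, g t ∈ S'.1) → C (Fin.cons x g) = c := by
      rintro ⟨S, hS⟩
      obtain ⟨x, hx⟩ := hS.nonempty
      have hinf : (S ∩ Set.Ioi x).Infinite := by
        have he : S \ Set.Iic x = S ∩ Set.Ioi x := by ext y; simp [not_le]
        simpa [he] using hS.diff (Set.finite_Iic x)
      obtain ⟨H', hH'sub, hH'inf, col, hcol⟩ := ih (fun g => C (Fin.cons x g)) _ hinf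
      exact ⟨x, ⟨H', hH'inf⟩, col, hx, fun y hy => (hH'sub hy).1,
        fun y hy => (hH'sub hy).2, hcol⟩
    choose X Snext colf hX hsub hgt hhom using step
    let chain : ℕ → {S : Set ℕ // S.Infinite} :=
      fun n => Nat.rec ⟨P, hP⟩ (fun _ ihc => Snext ihc) n
    have chain_succ : ∀ n, chain (n + 1) = Snext (chain n) := fun n => rfl
    have chain_mono : ∀ n m, n ≤ m → (chain m).1 ⊆ (chain n).1 := by
      intro n m h
      induction h with
      | refl => exact subset_rfl
      | step h ih2 => exact fun y hy => ih2 (hsub _ hy)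
    have chain_subP : ∀ n, (chain n).1 ⊆ P := fun n => chain_mono 0 n (Nat.zero_le n)
    set x : ℕ → ℕ := fun n => X (chain n) with hxdef
    have xmono : StrictMono x := by
      apply strictMono_nat_of_lt_succ
      intro n
      exact hgt (chain n) _ (hX (chain (n + 1)))
    set c : ℕ → Bool := fun n => colf (chain n) with hcdef
    have hpig : ∃ col : Bool, {n : ℕ | c n = col}.Infinite := by
      by_contra h
      push_neg at h
      have h1 : {n : ℕ | c n = true}.Finite := h true
      have h2 : {n : ℕ | c n = false}.Finite := h false
      have : (Set.univ : Set ℕ).Finite := by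
        refine Set.Finite.subset (h1.union h2) ?_
        intro n _
        rcases Bool.eq_false_or_eq_true (c n) with h | h
        · exact Or.inl h
        · exact Or.inr h
      exact Set.infinite_univ this
    obtain ⟨col, hcol⟩ := hpig
    refine ⟨x '' {n | c n = col}, ?_, hcol.image (xmono.injective.injOn), col, ?_⟩
    · rintro y ⟨n, _, rfl⟩
      exact chain_subP n (hX (chain n))
    · intro f hf hfH
      have : ∀ t, ∃ n, c n = col ∧ x n = f t := by
        intro t
        obtain ⟨n, hn, he⟩ := hfH t
        exact ⟨n, hn, he⟩
      choose m hmI hmx using this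
      have mmono : StrictMono m := by
        intro s t h
        have : x (m s) < x (m t) := by rw [hmx s, hmx t]; exact hf h
        exact xmono.lt_iff_lt.mp this
      have hf0 : f = Fin.cons (x (m 0)) (Fin.tail f) := by
        rw [hmx 0]; exact (Fin.cons_self_tail f).symm
      rw [hf0]
      have := hhom (chain (m 0)) (Fin.tail f) ?_ ?_
      · rw [this]; exact hmI 0
      · intro s t h
        exact hf (by simpa [Fin.succ_lt_succ_iff] using h)
      · intro t
        have h1 : m 0 + 1 ≤ m t.succ := mmono (Fin.succ_pos t)
        have h2 : x (m t.succ) ∈ (chain (m t.succ)).1 := hX _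
        have h3 : (chain (m t.succ)).1 ⊆ (chain (m 0 + 1)).1 := chain_mono _ _ h1
        have : Fin.tail f t = x (m t.succ) := (hmx t.succ).symm
        rw [this]
        exact h3 h2

private theorem interleave (H N : Set ℕ) (hH : H.Infinite) (hN : N.Infinite) :
    ∃ n : ℕ → ℕ, StrictMono n ∧ ∀ i, (Even i → n i ∈ H) ∧ (¬ Even i → n i ∈ N) := by
  have key : ∀ i x : ℕ, ∃ y, x < y ∧ (Even i → y ∈ H) ∧ (¬ Even i → y ∈ N) := by
    intro i x
    by_cases h : Even i
    · obtain ⟨y, hy, hxy⟩ := hH.exists_gt x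
      exact ⟨y, hxy, fun _ => hy, fun h' => absurd h h'⟩
    · obtain ⟨y, hy, hxy⟩ := hN.exists_gt x
      exact ⟨y, hxy, fun h' => absurd h' h, fun _ => hy⟩
  choose Y hlt hHm hNm using key
  refine ⟨fun i => Nat.rec (Y 0 0) (fun i prev => Y (i + 1) prev) i, ?_, ?_⟩
  · apply strictMono_nat_of_lt_succ
    intro n
    exact hlt (n + 1) _
  · intro i
    cases i with
    | zero => exact ⟨fun _ => hHm 0 0 Even.zero, fun h => absurd Even.zero h⟩
    | succ i => exact ⟨hHm (i + 1) _, hNm (i + 1) _⟩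

section AuxFormulas

variable {L : FirstOrder.Language.{0, 0}} {p q : ℕ} {γ : Type} {M : Type} [L.Structure M]

def psiRel (ψ : L.Formula (Fin p ⊕ Fin q)) (g : Fin q → γ) (i : ℕ) :
    L.Formula ((ℕ × Fin p) ⊕ γ) :=
  ψ.relabel (Sum.elim (fun j => Sum.inl (i, j)) (fun t => Sum.inr (g t)))

open Classical in
noncomputable def psiForm (ψ : L.Formula (Fin p ⊕ Fin q)) (g : Fin q → γ) (i : ℕ) :
    L.Formula ((ℕ × Fin p) ⊕ γ) :=
  if Even i then psiRel ψ g i else (psiRel ψ g i).not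

def emRel (γ : Type) (k : ℕ) (φ : L.Formula (Fin k × Fin p)) :
    L.Formula ((ℕ × Fin p) ⊕ γ) :=
  φ.relabel (fun u => Sum.inl ((u.1 : ℕ), u.2))

open Classical in
noncomputable def emForm (M : Type) [L.Structure M] (a : ℕ → Fin p → M) (γ : Type) (k : ℕ)
    (φ : L.Formula (Fin k × Fin p)) : L.Formula ((ℕ × Fin p) ⊕ γ) :=
  if φ.Realize (fun u : Fin k × Fin p => a (u.1 : ℕ) u.2) then emRel γ k φ
  else (emRel γ k φ).not

def indRel (k : ℕ) (φ : L.Formula ((Fin k × Fin p) ⊕ Fin q)) (g : Fin q → γ)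
    (i : Fin k → ℕ) : L.Formula ((ℕ × Fin p) ⊕ γ) :=
  φ.relabel (Sum.elim (fun u => Sum.inl (2 * i u.1, u.2)) (fun t => Sum.inr (g t)))

def indForm (k : ℕ) (φ : L.Formula ((Fin k × Fin p) ⊕ Fin q)) (g : Fin q → γ)
    (i j : Fin k → ℕ) : L.Formula ((ℕ × Fin p) ⊕ γ) :=
  (indRel k φ g i).iff (indRel k φ g j)

theorem realize_psiRel (ψ : L.Formula (Fin p ⊕ Fin q)) (g : Fin q → γ) (i : ℕ)
    (v : ℕ × Fin p → M) (w : γ → M) (b : Fin q → M) (hw : ∀ t, w (g t) = b t) :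
    (psiRel ψ g i).Realize (Sum.elim v w) ↔ ψ.Realize (Sum.elim (fun j => v (i, j)) b) := by
  rw [psiRel, Formula.realize_relabel]
  have he : (Sum.elim v w) ∘ (Sum.elim (fun j => Sum.inl (i, j)) (fun t => Sum.inr (g t)))
      = Sum.elim (fun j => v (i, j)) b := by
    funext x
    cases x with
    | inl j => rfl
    | inr t => exact hw t
  rw [he]

theorem realize_psiForm (ψ : L.Formula (Fin p ⊕ Fin q)) (g : Fin q → γ) (i : ℕ)
    (v : ℕ × Fin p → M) (w : γ → M) (b : Fin q → M) (hw : ∀ t, w (g t) = b t) :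
    (psiForm ψ g i).Realize (Sum.elim v w) ↔
      (ψ.Realize (Sum.elim (fun j => v (i, j)) b) ↔ Even i) := by
  by_cases he : Even i
  · rw [psiForm, if_pos he, realize_psiRel ψ g i v w b hw]
    simp [he]
  · rw [psiForm, if_neg he, Formula.realize_not, realize_psiRel ψ g i v w b hw]
    simp [he]

theorem realize_emRel (k : ℕ) (φ : L.Formula (Fin k × Fin p)) (v : ℕ × Fin p → M)
    (w : γ → M) :
    (emRel γ k φ).Realize (Sum.elim v w) ↔ φ.Realize (fun u => v ((u.1 : ℕ), u.2)) := by
  rw [emRel, Formula.realize_relabel]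
  exact Iff.rfl

theorem realize_emForm (a : ℕ → Fin p → M) (k : ℕ) (φ : L.Formula (Fin k × Fin p))
    (v : ℕ × Fin p → M) (w : γ → M) :
    (emForm M a γ k φ).Realize (Sum.elim v w) ↔
      (φ.Realize (fun u => v ((u.1 : ℕ), u.2)) ↔
        φ.Realize (fun u : Fin k × Fin p => a (u.1 : ℕ) u.2)) := by
  by_cases hc : φ.Realize (fun u : Fin k × Fin p => a (u.1 : ℕ) u.2)
  · rw [emForm, if_pos hc, realize_emRel k φ v w]
    simp [hc]
  · rw [emForm, if_neg hc, Formula.realize_not, realize_emRel k φ v w]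
    simp [hc]

theorem realize_indRel (k : ℕ) (φ : L.Formula ((Fin k × Fin p) ⊕ Fin q)) (g : Fin q → γ)
    (i : Fin k → ℕ) (v : ℕ × Fin p → M) (w : γ → M) (b : Fin q → M)
    (hw : ∀ t, w (g t) = b t) :
    (indRel k φ g i).Realize (Sum.elim v w) ↔
      φ.Realize (Sum.elim (fun u => v (2 * i u.1, u.2)) b) := by
  rw [indRel, Formula.realize_relabel]
  have he : (Sum.elim v w) ∘
      (Sum.elim (fun u : Fin k × Fin p => Sum.inl (2 * i u.1, u.2)) (fun t => Sum.inr (g t)))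
      = Sum.elim (fun u : Fin k × Fin p => v (2 * i u.1, u.2)) b := by
    funext x
    cases x with
    | inl u => rfl
    | inr t => exact hw t
  rw [he]

theorem realize_indForm (k : ℕ) (φ : L.Formula ((Fin k × Fin p) ⊕ Fin q)) (g : Fin q → γ)
    (i j : Fin k → ℕ) (v : ℕ × Fin p → M) (w : γ → M) (b : Fin q → M)
    (hw : ∀ t, w (g t) = b t) :
    (indForm k φ g i j).Realize (Sum.elim v w) ↔
      (φ.Realize (Sum.elim (fun u => v (2 * i u.1, u.2)) b) ↔
        φ.Realize (Sum.elim (fun u => v (2 * j u.1, u.2)) b)) := by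
  rw [indForm, Formula.realize_iff, realize_indRel k φ g i v w b hw,
    realize_indRel k φ g j v w b hw]

end AuxFormulas

/-- Proposition 2.3 of "Dependent Pairs": if `ψ(a⃗ᵢ, b⃗)` holds for
infinitely many `i` and fails for infinitely many `i`, then there is a sequence `(c⃗ᵢ)`
whose even-indexed subsequence is indiscernible over `b⃗`, with `ψ(c⃗ᵢ, b⃗)` holding exactly
for even `i`, and realizing the same formulas at initial segments as `(a⃗ᵢ)`. -/
theorem statement_1 (L : FirstOrder.Language.{0, 0}) (T' : L.Theory)
    (M : Type) [L.Structure M] (hM : T'.Model M)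
    (κ : Cardinal.{0}) (hκ : L.card + Cardinal.aleph0 < κ)
    (hsat : IsSaturated L M κ)
    (p q : ℕ) (a : ℕ → Fin p → M) (ha : IsIndiscernible L a)
    (b : Fin q → M) (ψ : L.Formula (Fin p ⊕ Fin q))
    (hpos : {i : ℕ | ψ.Realize (Sum.elim (a i) b)}.Infinite)
    (hneg : {i : ℕ | ¬ ψ.Realize (Sum.elim (a i) b)}.Infinite) :
    ∃ c : ℕ → Fin p → M,
      IsIndiscernibleOver L (fun i => c (2 * i)) b ∧
      (∀ i : ℕ, ψ.Realize (Sum.elim (c i) b) ↔ Even i) ∧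
      ∀ (k : ℕ) (φ : L.Formula (Fin k × Fin p)),
        (φ.Realize (fun v => c v.1 v.2) ↔ φ.Realize (fun v => a v.1 v.2)) := by
  classical
  set A : Set M := (⋃ i, Set.range (a i)) ∪ Set.range b with hAdef
  have hbA : ∀ t, b t ∈ A := fun t => Or.inr ⟨t, rfl⟩
  set bA : Fin q → A := fun t => ⟨b t, hbA t⟩ with hbAdef
  have hwb : ∀ t, (Subtype.val : A → M) (bA t) = b t := fun t => rfl
  set Ppos : Set ℕ := {i | ψ.Realize (Sum.elim (a i) b)} with hPposdef
  set Nneg : Set ℕ := {i | ¬ ψ.Realize (Sum.elim (a i) b)} with hNnegdef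
  set S : Set (L.Formula ((ℕ × Fin p) ⊕ A)) :=
    ({F | ∃ i : ℕ, F = psiForm ψ bA i} ∪
      {F | ∃ (k : ℕ) (φ : L.Formula (Fin k × Fin p)), F = emForm M a (↥A) k φ}) ∪
    {F | ∃ (k : ℕ) (φ : L.Formula ((Fin k × Fin p) ⊕ Fin q)) (i j : Fin k → ℕ),
      StrictMono i ∧ StrictMono j ∧ F = indForm k φ bA i j} with hSdef
  have main : ∀ s : Finset (L.Formula ((ℕ × Fin p) ⊕ A)), ↑s ⊆ S →
      ∃ H, H ⊆ Ppos ∧ H.Infinite ∧ ∀ n : ℕ → ℕ, StrictMono n →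
        (∀ t, Even t → n t ∈ H) → (∀ t, ¬ Even t → n t ∈ Nneg) →
        ∀ F ∈ s, F.Realize
          (Sum.elim (fun u : ℕ × Fin p => a (n u.1) u.2) (Subtype.val : A → M)) := by
    intro s
    induction s using Finset.induction_on with
    | empty =>
      intro _
      exact ⟨Ppos, subset_rfl, hpos, fun n _ _ _ F hF => absurd hF (by simp)⟩
    | @insert F s hFs ih =>
      intro hsub
      have hFS : F ∈ S := hsub (Finset.mem_coe.mpr (Finset.mem_insert_self F s))
      have hr : ↑s ⊆ S := fun x hx => hsub (Finset.mem_coe.mpr (Finset.mem_insert_of_mem hx))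
      obtain ⟨H₀, hH₀P, hH₀inf, hIH⟩ := ih hr
      rw [hSdef] at hFS
      rcases hFS with (⟨i, rfl⟩ | ⟨k, φ, rfl⟩) | ⟨k, φ, i, j, hi, hj, rfl⟩
      · refine ⟨H₀, hH₀P, hH₀inf, ?_⟩
        intro n hn hnH hnN F' hF'
        rcases Finset.mem_insert.mp hF' with rfl | hF'
        · rw [realize_psiForm ψ bA i _ _ b hwb]
          by_cases he : Even i
          · simp only [he, iff_true]
            exact hH₀P (hnH i he)
          · simp only [he, iff_false]
            exact hnN i he
        · exact hIH n hn hnH hnN F' hF'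
      · refine ⟨H₀, hH₀P, hH₀inf, ?_⟩
        intro n hn hnH hnN F' hF'
        rcases Finset.mem_insert.mp hF' with rfl | hF'
        · rw [realize_emForm a k φ _ _]
          exact ha k φ (fun t => n (t : ℕ)) (fun t => (t : ℕ))
            (hn.comp Fin.val_strictMono) Fin.val_strictMono
        · exact hIH n hn hnH hnN F' hF'
      · obtain ⟨H, hHH₀, hHinf, col, hcol⟩ := ramsey k
          (fun m => decide (φ.Realize (Sum.elim (fun u : Fin k × Fin p => a (m u.1) u.2) b)))
          H₀ hH₀inf
        refine ⟨H, hHH₀.trans hH₀P, hHinf, ?_⟩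
        intro n hn hnH hnN F' hF'
        rcases Finset.mem_insert.mp hF' with rfl | hF'
        · rw [realize_indForm k φ bA i j _ _ b hwb]
          have e1 := hcol (fun t => n (2 * i t)) ?_ ?_
          · have e2 := hcol (fun t => n (2 * j t)) ?_ ?_
            · exact decide_eq_decide.mp (e1.trans e2.symm)
            · intro s' t h
              exact hn (by have := hj h; omega)
            · intro t
              exact hnH (2 * j t) (even_two_mul _)
          · intro s' t h
            exact hn (by have := hi h; omega)
          · intro t
            exact hnH (2 * i t) (even_two_mul _)
        · exact hIH n hn (fun t ht => hHH₀ (hnH t ht)) hnN F' hF'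
  have hα : #(ℕ × Fin p) < κ :=
    lt_of_le_of_lt Cardinal.mk_le_aleph0 (lt_of_le_of_lt le_add_self hκ)
  have hAcard : #A < κ := by
    have hc : A.Countable :=
      ((Set.countable_iUnion fun i => (Set.finite_range (a i)).countable)).union
        (Set.finite_range b).countable
    haveI := hc.to_subtype
    exact lt_of_le_of_lt Cardinal.mk_le_aleph0 (lt_of_le_of_lt le_add_self hκ)
  have hfinsat : ∀ s : Finset (L.Formula ((ℕ × Fin p) ⊕ A)), ↑s ⊆ S →
      ∃ v : ℕ × Fin p → M, ∀ F ∈ s, F.Realize (Sum.elim v (Subtype.val : A → M)) := by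
    intro s hs
    obtain ⟨H, hHP, hHinf, hmain⟩ := main s hs
    obtain ⟨n, hn, hpar⟩ := interleave H Nneg hHinf hneg
    exact ⟨fun u => a (n u.1) u.2,
      fun F hF => hmain n hn (fun t ht => (hpar t).1 ht) (fun t ht => (hpar t).2 ht) F hF⟩
  obtain ⟨v, hv⟩ := hsat (ℕ × Fin p) hα A hAcard S hfinsat
  refine ⟨fun i j => v (i, j), ?_, ?_, ?_⟩
  · intro k φ i j hi hj
    have hmem : indForm k φ bA i j ∈ S := by
      rw [hSdef]
      exact Set.mem_union_right _ ⟨k, φ, i, j, hi, hj, rfl⟩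
    exact (realize_indForm k φ bA i j v Subtype.val b hwb).mp (hv _ hmem)
  · intro i
    have hmem : psiForm ψ bA i ∈ S := by
      rw [hSdef]
      exact Set.mem_union_left _ (Set.mem_union_left _ ⟨i, rfl⟩)
    exact (realize_psiForm ψ bA i v Subtype.val b hwb).mp (hv _ hmem)
  · intro k φ
    have hmem : emForm M a (↥A) k φ ∈ S := by
      rw [hSdef]
      exact Set.mem_union_left _ (Set.mem_union_right _ ⟨k, φ, rfl⟩)
    exact (realize_emForm a k φ v Subtype.val).mp (hv _ hmem)


end PaperDep
end

section
/- Let R̃ be an o-minimal expansion of the ordered real field (ℝ,<,+,·,0,1) that is polynomially bounded with field of exponents ℚ, let T be its complete theory in a language L for which T admits quantifier elimination and a universal axiomatization, let λ : ℝ → 2^ℤ ∪ {0} be defined by λ(x) = the unique g ∈ 2^ℤ with g ≤ x < 2g for x > 0 and λ(x) = 0 for x ≤ 0, and let T_disc be the complete theory of (R̃, λ) in L(λ) = L ∪ {λ}. Let (B,λ) ⪯ (A,λ) be models of T_disc and let g ∈ G_A := λ(A) ∖ {0} with g ∉ G_B := λ(B) ∖ {0}. Then there are no b ∈ B with b ≠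 0 and positive integer n such that 1/n ≤ g/b ≤ n. -/
open FirstOrder FirstOrder.Language FirstOrder.Language.Structure Cardinal Set

namespace PaperDep

/-! ### Auxiliary development for Statement 15 -/

section RealLam

/-- basic facts about `lam` on `ℝ` -/
theorem lam_nonpos {x : ℝ} (hx : x ≤ 0) : lam x = 0 := by
  rw [lam, dif_neg]
  rintro ⟨k, hk1, _⟩
  have := zpow_pos (by norm_num : (0:ℝ) < 2) k
  linarith

theorem lam_mem {x : ℝ} (hx : 0 < x) :
    ∃ k : ℤ, lam x = 2 ^ k ∧ (2:ℝ) ^ k ≤ x ∧ x < 2 * 2 ^ k := by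
  have h : ∃ k : ℤ, (2:ℝ) ^ k ≤ x ∧ x < 2 * (2:ℝ) ^ k := by
    refine ⟨Int.log 2 x, ?_, ?_⟩
    · simpa using Int.zpow_log_le_self (b := 2) (by norm_num) hx
    · have h2 := Int.lt_zpow_succ_log_self (b := 2) (by norm_num) x
      have h2' : x < (2:ℝ) ^ (Int.log 2 x + 1) := by exact_mod_cast h2
      rw [zpow_add_one₀ (by norm_num : (2:ℝ) ≠ 0)] at h2'
      linarith
  exact ⟨h.choose, by rw [lam, dif_pos h], h.choose_spec⟩

theorem lam_pow_unique {k l : ℤ} {x : ℝ} (h1 : (2:ℝ) ^ k ≤ x) (h2 : x < 2 * 2 ^ k)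
    (h3 : (2:ℝ) ^ l ≤ x) (h4 : x < 2 * 2 ^ l) : k = l := by
  have key : ∀ a b : ℤ, (2:ℝ) ^ a ≤ x → x < 2 * (2:ℝ) ^ b → a ≤ b := by
    intro a b ha hb
    by_contra hab
    push_neg at hab
    have hba : b + 1 ≤ a := hab
    have : (2:ℝ) ^ (b + 1) ≤ (2:ℝ) ^ a :=
      zpow_le_zpow_right₀ (by norm_num : (1:ℝ) ≤ 2) hba
    rw [zpow_add_one₀ (by norm_num : (2:ℝ) ≠ 0)] at this
    linarith
  exact le_antisymm (key k l h1 h4) (key l k h3 h2)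

theorem lam_eq {x : ℝ} {k : ℤ} (h1 : (2:ℝ) ^ k ≤ x) (h2 : x < 2 * 2 ^ k) : lam x = 2 ^ k := by
  have hx : 0 < x := lt_of_lt_of_le (zpow_pos (by norm_num) k) h1
  obtain ⟨l, hl, hl1, hl2⟩ := lam_mem hx
  rw [hl, lam_pow_unique hl1 hl2 h1 h2]

theorem lam_nonneg (x : ℝ) : 0 ≤ lam x := by
  rcases le_or_gt x 0 with hx | hx
  · rw [lam_nonpos hx]
  · obtain ⟨k, hk, _, _⟩ := lam_mem hx
    rw [hk]
    exact (zpow_pos (by norm_num) k).le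

theorem lam_pos {x : ℝ} (hx : 0 < x) : lam x ≠ 0 := by
  obtain ⟨k, hk, _, _⟩ := lam_mem hx
  rw [hk]
  exact ne_of_gt (zpow_pos (by norm_num) k)

theorem pos_of_lam_ne_zero {x : ℝ} (hx : lam x ≠ 0) : 0 < x := by
  by_contra h
  push_neg at h
  exact hx (lam_nonpos h)

theorem lam_mono {x y : ℝ} (hxy : x ≤ y) : lam x ≤ lam y := by
  rcases le_or_gt x 0 with hx | hx
  · rw [lam_nonpos hx]; exact lam_nonneg y
  · have hy : 0 < y := lt_of_lt_of_le hx hxy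
    obtain ⟨k, hk, hk1, hk2⟩ := lam_mem hx
    obtain ⟨l, hl, hl1, hl2⟩ := lam_mem hy
    rw [hk, hl]
    by_contra hlt
    push_neg at hlt
    have hkl : l + 1 ≤ k := by
      by_contra h'
      push_neg at h'
      exact absurd (zpow_le_zpow_right₀ (by norm_num : (1:ℝ) ≤ 2) (by omega : k ≤ l))
        (not_le.2 hlt)
    have : (2:ℝ) ^ (l + 1) ≤ (2:ℝ) ^ k :=
      zpow_le_zpow_right₀ (by norm_num : (1:ℝ) ≤ 2) hkl
    rw [zpow_add_one₀ (by norm_num : (2:ℝ) ≠ 0)] at this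
    linarith

theorem lam_double (x : ℝ) : lam (x + x) = lam x + lam x := by
  rcases le_or_gt x 0 with hx | hx
  · rw [lam_nonpos hx, lam_nonpos (by linarith), add_zero]
  · obtain ⟨k, hk, hk1, hk2⟩ := lam_mem hx
    have e : (2:ℝ) ^ (k + 1) = 2 ^ k * 2 := zpow_add_one₀ (by norm_num) k
    have h1 : (2:ℝ) ^ (k + 1) ≤ x + x := by rw [e]; linarith
    have h2 : x + x < 2 * 2 ^ (k + 1) := by rw [e]; linarith
    rw [lam_eq h1 h2, hk, e]
    ring

theorem lam_idem {x : ℝ} (hx : lam x ≠ 0) : lam (lam x) = lam x := by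
  obtain ⟨k, hk, _, _⟩ := lam_mem (pos_of_lam_ne_zero hx)
  have hp : (0:ℝ) < 2 ^ k := zpow_pos (by norm_num) k
  rw [hk, lam_eq (le_refl ((2:ℝ) ^ k)) (by linarith)]

theorem lam_gap {x y : ℝ} (hx : lam x ≠ 0) (hy : lam y ≠ 0) (h1 : lam x ≤ lam y)
    (h2 : lam y ≤ lam x + lam x) : lam y = lam x ∨ lam y = lam x + lam x := by
  obtain ⟨k, hk, _, _⟩ := lam_mem (pos_of_lam_ne_zero hx)
  obtain ⟨l, hl, _, _⟩ := lam_mem (pos_of_lam_ne_zero hy)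
  rw [hk, hl] at h1 h2 ⊢
  have e : (2:ℝ) ^ k + 2 ^ k = 2 ^ (k + 1) := by
    rw [zpow_add_one₀ (by norm_num : (2:ℝ) ≠ 0)]; ring
  rw [e] at h2 ⊢
  have hkl : k ≤ l := by
    by_contra h'
    push_neg at h'
    exact absurd (zpow_le_zpow_right₀ (by norm_num : (1:ℝ) ≤ 2) h'.le)
      (by simpa using (lt_of_lt_of_le (zpow_lt_zpow_right₀ (by norm_num : (1:ℝ) < 2) h') h1).not_ge)
  have hlk : l ≤ k + 1 := by
    by_contra h'
    push_neg at h'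
    exact absurd (zpow_le_zpow_right₀ (by norm_num : (1:ℝ) ≤ 2) h')
      (by simpa using (lt_of_le_of_lt h2 (zpow_lt_zpow_right₀ (by norm_num : (1:ℝ) < 2) h')).not_ge)
  rcases eq_or_lt_of_le hkl with rfl | h'
  · exact Or.inl rfl
  · have : l = k + 1 := le_antisymm hlk h'
    subst this
    exact Or.inr rfl

end RealLam

section Syntax15

variable {L : FirstOrder.Language.{0, 0}} [L.IsOrdered]

/-- The function symbol for `λ` in `LF L`. -/
def lamSymb : (LF L).Functions 1 := Sum.inr PUnit.unit

/-- An `L`-term viewed as an `LF L`-term. -/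
def tLF {α : Type} (t : L.Term α) : (LF L).Term α :=
  (LHom.sumInl (L' := unaryFunLang)).onTerm t

variable (ops : RingOps L)

/-- Addition as an `LF L`-term operation. -/
def tAdd {α : Type} (t s : (LF L).Term α) : (LF L).Term α :=
  (tLF ops.add).subst ![t, s]

/-- Multiplication as an `LF L`-term operation. -/
def tMul {α : Type} (t s : (LF L).Term α) : (LF L).Term α :=
  (tLF ops.mul).subst ![t, s]

/-- Zero as an `LF L`-term. -/
def tZero {α : Type} : (LF L).Term α := (tLF ops.zero).relabel Fin.elim0

/-- One as an `LF L`-term. -/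
def tOne {α : Type} : (LF L).Term α := (tLF ops.one).relabel Fin.elim0

/-- `λ` applied to a term. -/
def tLam {α : Type} (t : (LF L).Term α) : (LF L).Term α := Term.func lamSymb ![t]

/-- The order relation between terms. -/
def fLe {α : Type} (t s : (LF L).Term α) : (LF L).Formula α :=
  Relations.formula₂ (Sum.inl (leSymb : L.Relations 2)) t s

section RealizeLemmas

variable {M : Type*} [L.Structure M] [iLF : (LF L).Structure M]
variable (lamM : M → M)
variable (hF : ∀ {n : ℕ} (f : L.Functions n) (x : Fin n → M),
    Structure.funMap (L := LF L) (Sum.inl f) x = Structure.funMap f x)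
variable (hLam : ∀ x : Fin 1 → M,
    Structure.funMap (L := LF L) (lamSymb (L := L)) x = lamM (x 0))
variable (hRel : ∀ x : Fin 2 → M,
    Structure.RelMap (L := LF L) (Sum.inl (leSymb : L.Relations 2)) x ↔
      Structure.RelMap (leSymb : L.Relations 2) x)

include hF in
theorem realize_tLF {α : Type} (t : L.Term α) (v : α → M) :
    (tLF t).realize v = t.realize v := by
  induction t with
  | var a => rfl
  | func f ts ih =>
    show Structure.funMap (L := LF L) (Sum.inl f) (fun i => (tLF (ts i)).realize v) = _
    rw [hF]
    simp only [Term.realize]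
    congr 1
    funext i
    exact ih i

variable [Field M] [LinearOrder M] [IsStrictOrderedRing M] (hc : OrdCompat L M) (hops : ops.Compat M)

include hF hops in
theorem realize_tAdd {α : Type} (t s : (LF L).Term α) (v : α → M) :
    (tAdd ops t s).realize v = t.realize v + s.realize v := by
  rw [tAdd, Term.realize_subst, realize_tLF (hF := hF)]
  have e : (fun i => ((![t, s] : Fin 2 → (LF L).Term α) i).realize v) =
      ![t.realize v, s.realize v] := by
    funext i; fin_cases i <;> rfl
  rw [e, hops.1]

include hF hops in
theorem realize_tMul {α : Type} (t s : (LF L).Term α) (v : α → M) :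
    (tMul ops t s).realize v = t.realize v * s.realize v := by
  rw [tMul, Term.realize_subst, realize_tLF (hF := hF)]
  have e : (fun i => ((![t, s] : Fin 2 → (LF L).Term α) i).realize v) =
      ![t.realize v, s.realize v] := by
    funext i; fin_cases i <;> rfl
  rw [e, hops.2.1]

include hF hops in
theorem realize_tZero {α : Type} (v : α → M) : (tZero (L := L) ops).realize v = 0 := by
  rw [tZero, Term.realize_relabel, realize_tLF (hF := hF)]
  have e : v ∘ Fin.elim0 = (fun i : Fin 0 => i.elim0) := by
    funext i; exact i.elim0
  rw [e, hops.2.2.2.1]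

include hF hops in
theorem realize_tOne {α : Type} (v : α → M) : (tOne (L := L) ops).realize v = 1 := by
  rw [tOne, Term.realize_relabel, realize_tLF (hF := hF)]
  have e : v ∘ Fin.elim0 = (fun i : Fin 0 => i.elim0) := by
    funext i; exact i.elim0
  rw [e, hops.2.2.2.2]

include hLam in
theorem realize_tLam {α : Type} (t : (LF L).Term α) (v : α → M) :
    (tLam t).realize v = lamM (t.realize v) := by
  show Structure.funMap (L := LF L) lamSymb
      (fun i => ((![t] : Fin 1 → (LF L).Term α) i).realize v) = _
  rw [hLam]
  simp

include hRel hc in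
theorem realize_fLe {α : Type} (t s : (LF L).Term α) (v : α → M) :
    (fLe t s).Realize v ↔ t.realize v ≤ s.realize v := by
  unfold fLe Relations.formula₂
  erw [Formula.realize_rel]
  have e : (fun i => ((![t, s] : Fin 2 → (LF L).Term α) i).realize v) =
      ![t.realize v, s.realize v] := by
    funext i; fin_cases i <;> rfl
  rw [e, hRel, hc]

end RealizeLemmas

end Syntax15

section Sentences15

open FirstOrder.Language

variable (L : FirstOrder.Language.{0, 0}) [L.IsOrdered] (ops : RingOps L)

/-- monotonicity of λ -/
noncomputable def sMono : (LF L).Sentence :=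
  Formula.iAlls (Fin 2) <| Formula.relabel (Sum.inr : Fin 2 → Empty ⊕ Fin 2) <|
    ((fLe (Term.var 0) (Term.var 1)).imp (fLe (tLam (Term.var 0)) (tLam (Term.var 1))))

/-- λ(x+x) = λx + λx -/
noncomputable def sDouble : (LF L).Sentence :=
  Formula.iAlls (Fin 1) <| Formula.relabel (Sum.inr : Fin 1 → Empty ⊕ Fin 1) <|
    (Term.equal (tLam (tAdd ops (Term.var 0) (Term.var 0)))
      (tAdd ops (tLam (Term.var 0)) (tLam (Term.var 0))))

/-- 0 ≤ λx -/
noncomputable def sNonneg : (LF L).Sentence :=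
  Formula.iAlls (Fin 1) <| Formula.relabel (Sum.inr : Fin 1 → Empty ⊕ Fin 1) <|
    (fLe (tZero ops) (tLam (Term.var 0)))

/-- 0 < x → λx ≠ 0 -/
noncomputable def sPos : (LF L).Sentence :=
  Formula.iAlls (Fin 1) <| Formula.relabel (Sum.inr : Fin 1 → Empty ⊕ Fin 1) <|
    (((fLe (Term.var 0) (tZero ops)).not).imp ((Term.equal (tLam (Term.var 0)) (tZero ops)).not))

/-- λx ≠ 0 → λ(λx) = λx -/
noncomputable def sIdem : (LF L).Sentence :=
  Formula.iAlls (Fin 1) <| Formula.relabel (Sum.inr : Fin 1 → Empty ⊕ Fin 1) <|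
    (((Term.equal (tLam (Term.var 0)) (tZero ops)).not).imp
      (Term.equal (tLam (tLam (Term.var 0))) (tLam (Term.var 0))))

/-- the gap property of λ -/
noncomputable def sGap : (LF L).Sentence :=
  Formula.iAlls (Fin 2) <| Formula.relabel (Sum.inr : Fin 2 → Empty ⊕ Fin 2) <|
    (((Term.equal (tLam (Term.var 0)) (tZero ops)).not).imp
      (((Term.equal (tLam (Term.var 1)) (tZero ops)).not).imp
        ((fLe (tLam (Term.var 0)) (tLam (Term.var 1))).imp
          ((fLe (tLam (Term.var 1)) (tAdd ops (tLam (Term.var 0)) (tLam (Term.var 0)))).imp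
            ((Term.equal (tLam (Term.var 1)) (tLam (Term.var 0))) ⊔
              (Term.equal (tLam (Term.var 1))
                (tAdd ops (tLam (Term.var 0)) (tLam (Term.var 0)))))))))

/-- ∃ y, y + y = 1 -/
noncomputable def sHalf : (LF L).Sentence :=
  Formula.iExs (Fin 1) <| Formula.relabel (Sum.inr : Fin 1 → Empty ⊕ Fin 1) <|
    (Term.equal (tAdd ops (Term.var 0) (Term.var 0)) (tOne ops))

variable {L ops}
variable {M : Type} [L.Structure M] [iLF : (LF L).Structure M]
variable (lamM : M → M)
variable (hF : ∀ {n : ℕ} (f : L.Functions n) (x : Fin n → M),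
    Structure.funMap (L := LF L) (Sum.inl f) x = Structure.funMap f x)
variable (hLam : ∀ x : Fin 1 → M,
    Structure.funMap (L := LF L) (lamSymb (L := L)) x = lamM (x 0))
variable (hRel : ∀ x : Fin 2 → M,
    Structure.RelMap (L := LF L) (Sum.inl (leSymb : L.Relations 2)) x ↔
      Structure.RelMap (leSymb : L.Relations 2) x)
variable [Field M] [LinearOrder M] [IsStrictOrderedRing M]
variable (hc : OrdCompat L M) (hops : ops.Compat M)

include hLam hRel hc in
theorem realize_sMono :
    M ⊨ sMono L ↔ ∀ x y : M, x ≤ y → lamM x ≤ lamM y := by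
  rw [Sentence.Realize, sMono, Formula.realize_iAlls]
  simp only [Formula.realize_imp, realize_fLe hRel hc, realize_tLam lamM hLam,
    Term.realize_var, Sum.elim_inr, Formula.realize_relabel, Sum.elim_comp_inr]
  constructor
  · intro h x y hxy
    simpa using h ![x, y] (by simpa using hxy)
  · intro h i
    exact h _ _

include hF hLam hops in
theorem realize_sDouble :
    M ⊨ sDouble L ops ↔ ∀ x : M, lamM (x + x) = lamM x + lamM x := by
  rw [Sentence.Realize, sDouble, Formula.realize_iAlls]
  simp only [Formula.realize_equal, realize_tLam lamM hLam, realize_tAdd ops hF hops,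
    Term.realize_var, Sum.elim_inr, Formula.realize_relabel, Sum.elim_comp_inr]
  constructor
  · intro h x
    simpa using h ![x]
  · intro h i
    exact h _

include hF hLam hRel hc hops in
theorem realize_sNonneg :
    M ⊨ sNonneg L ops ↔ ∀ x : M, 0 ≤ lamM x := by
  rw [Sentence.Realize, sNonneg, Formula.realize_iAlls]
  simp only [realize_fLe hRel hc, realize_tZero ops hF hops, realize_tLam lamM hLam,
    Term.realize_var, Sum.elim_inr, Formula.realize_relabel, Sum.elim_comp_inr]
  constructor
  · intro h x
    simpa using h ![x]
  · intro h i
    exact h _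

include hF hLam hRel hc hops in
theorem realize_sPos :
    M ⊨ sPos L ops ↔ ∀ x : M, 0 < x → lamM x ≠ 0 := by
  rw [Sentence.Realize, sPos, Formula.realize_iAlls]
  simp only [Formula.realize_imp, Formula.realize_not, realize_fLe hRel hc,
    Formula.realize_equal, realize_tZero ops hF hops, realize_tLam lamM hLam,
    Term.realize_var, Sum.elim_inr, Formula.realize_relabel, Sum.elim_comp_inr, not_le]
  constructor
  · intro h x hx
    simpa using h ![x] (by simpa using hx)
  · intro h i
    exact h _

include hF hLam hops in
theorem realize_sIdem :
    M ⊨ sIdem L ops ↔ ∀ x : M, lamM x ≠ 0 → lamM (lamM x) = lamM x := by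
  rw [Sentence.Realize, sIdem, Formula.realize_iAlls]
  simp only [Formula.realize_imp, Formula.realize_not, Formula.realize_equal,
    realize_tZero ops hF hops, realize_tLam lamM hLam, Term.realize_var, Sum.elim_inr, Formula.realize_relabel, Sum.elim_comp_inr]
  constructor
  · intro h x hx
    simpa using h ![x] (by simpa using hx)
  · intro h i
    exact h _

include hF hLam hRel hc hops in
theorem realize_sGap :
    M ⊨ sGap L ops ↔ ∀ x y : M, lamM x ≠ 0 → lamM y ≠ 0 → lamM x ≤ lamM y →
      lamM y ≤ lamM x + lamM x → lamM y = lamM x ∨ lamM y = lamM x + lamM x := by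
  rw [Sentence.Realize, sGap, Formula.realize_iAlls]
  simp only [Formula.realize_imp, Formula.realize_not, Formula.realize_sup,
    Formula.realize_equal, realize_fLe hRel hc, realize_tAdd ops hF hops,
    realize_tZero ops hF hops, realize_tLam lamM hLam, Term.realize_var, Sum.elim_inr, Formula.realize_relabel, Sum.elim_comp_inr]
  constructor
  · intro h x y h1 h2 h3 h4
    have := h ![x, y]
    simp only [Matrix.cons_val_zero, Matrix.cons_val_one, Matrix.head_cons] at this
    exact this h1 h2 h3 h4
  · intro h i
    exact h _ _

include hF hops in
theorem realize_sHalf :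
    M ⊨ sHalf L ops ↔ ∃ y : M, y + y = 1 := by
  rw [Sentence.Realize, sHalf, Formula.realize_iExs]
  simp only [Formula.realize_equal, realize_tAdd ops hF hops, realize_tOne ops hF hops,
    Term.realize_var, Sum.elim_inr, Formula.realize_relabel, Sum.elim_comp_inr]
  constructor
  · rintro ⟨i, hi⟩
    exact ⟨i 0, hi⟩
  · rintro ⟨y, hy⟩
    exact ⟨![y], by simpa using hy⟩

end Sentences15

section Key15

/-- The purely algebraic core of Statement 15. -/
theorem lam_chain {A : Type*} [Field A] [LinearOrder A] [IsStrictOrderedRing A] (lamA : A → A)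
    (mono : ∀ x y : A, x ≤ y → lamA x ≤ lamA y)
    (double : ∀ x : A, lamA (x + x) = lamA x + lamA x)
    (pos : ∀ x : A, 0 < x → lamA x ≠ 0)
    (gap : ∀ x y : A, lamA x ≠ 0 → lamA y ≠ 0 → lamA x ≤ lamA y →
      lamA y ≤ lamA x + lamA x → lamA y = lamA x ∨ lamA y = lamA x + lamA x)
    (g b : A) (hg : lamA g = g) (hgne : g ≠ 0) (hb : 0 < b)
    (n : ℕ) (hn : 0 < n) (h1 : b / n ≤ g) (h2 : g ≤ n * b) :
    ∃ j : ℤ, g = lamA (b * 2 ^ j) := by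
  set c : ℤ → A := fun j => b * 2 ^ j with hc
  have hcpos : ∀ j : ℤ, 0 < c j := fun j => mul_pos hb (zpow_pos (by norm_num) j)
  have hnA : (0:A) < n := by exact_mod_cast hn
  have hn2 : (n : A) ≤ 2 ^ n := by
    have := Nat.lt_two_pow_self (n := n)
    exact_mod_cast this.le
  have h2npos : (0:A) < 2 ^ n := by positivity
  have hcsucc : ∀ j : ℤ, c (j + 1) = c j + c j := by
    intro j
    rw [hc]
    simp only
    rw [zpow_add_one₀ (by norm_num : (2:A) ≠ 0)]
    ring
  have hdouble' : ∀ j : ℤ, lamA (c (j + 1)) = lamA (c j) + lamA (c j) := by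
    intro j
    rw [hcsucc j, double]
  have hlow : c (-(n:ℤ)) ≤ g := by
    have e : c (-(n:ℤ)) = b / 2 ^ n := by
      rw [hc]
      simp only
      rw [zpow_neg, zpow_natCast, div_eq_mul_inv]
    rw [e]
    calc b / 2 ^ n ≤ b / n := by
          apply div_le_div_of_nonneg_left hb.le hnA hn2
      _ ≤ g := h1
  have hhigh : g ≤ c (n : ℤ) := by
    have e : c (n:ℤ) = 2 ^ n * b := by
      rw [hc]
      simp only
      rw [zpow_natCast]
      ring
    rw [e]
    calc g ≤ n * b := h2
      _ ≤ 2 ^ n * b := by nlinarith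
  have hlam_low : lamA (c (-(n:ℤ))) ≤ g := by
    have := mono _ _ hlow
    rwa [hg] at this
  have claim : ∀ k : ℕ, g ≤ lamA (c (-(n:ℤ) + k)) → ∃ j : ℤ, g = lamA (c j) := by
    intro k
    induction k with
    | zero =>
      intro h
      refine ⟨-(n:ℤ), le_antisymm ?_ ?_⟩
      · simpa using h
      · exact hlam_low
    | succ k ih =>
      intro h
      rcases le_or_gt g (lamA (c (-(n:ℤ) + k))) with h' | h'
      · exact ih h'
      · have hgap := gap (c (-(n:ℤ) + k)) g (pos _ (hcpos _))
          (by rw [hg]; exact hgne) (by rw [hg]; exact h'.le)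
          (by
            rw [hg, ← hdouble']
            have e : (-(n:ℤ) + (k : ℤ)) + 1 = -(n:ℤ) + ((k+1 : ℕ) : ℤ) := by push_cast; ring
            rw [e]
            exact h)
        rw [hg] at hgap
        rcases hgap with h'' | h''
        · exact ⟨_, h''⟩
        · rw [← hdouble'] at h''
          exact ⟨_, h''⟩
  apply claim (2 * n)
  have e : -(n:ℤ) + ((2 * n : ℕ) : ℤ) = (n : ℤ) := by push_cast; ring
  rw [e, ← hg]
  exact mono _ _ hhigh

end Key15

/-- the Claim in the proof of Corollary 6.5 of "Dependent Pairs": with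
`T_disc` as before and `(B, λ) ⪯ (A, λ)` models of `T_disc`, if `g ∈ G_A := λ(A) ∖ {0}` and
`g ∉ G_B := λ(B) ∖ {0}`, then there are no nonzero `b ∈ B` and `n ≥ 1` with
`1/n ≤ g/b ≤ n`. -/
theorem statement_15 (L : FirstOrder.Language.{0, 0}) [L.IsOrdered] [L.Structure ℝ]
    (hcR : OrdCompat L ℝ) (ops : RingOps L) (hopsR : ops.Compat ℝ)
    (hominR : OMinimalStructure L ℝ) (hpb : PolyBounded L) (hexp : FieldOfExpQ L)
    (hQE : HasQE (L.completeTheory ℝ)) (hUniv : HasUnivAx (L.completeTheory ℝ)) :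
    letI : (LF L).Structure ℝ := LFStructure L ℝ lam
    ∀ (A : Type) [L.Structure A] [Field A] [LinearOrder A] [IsStrictOrderedRing A] (lamA : A → A),
      OrdCompat L A → ops.Compat A →
      (letI : (LF L).Structure A := LFStructure L A lamA
       (((LF L).completeTheory ℝ).Model A) →
       ∀ (B : (LF L).ElementarySubstructure A) (g : A),
         g ∈ Set.range lamA → g ≠ 0 →
         g ∉ {x : A | x ∈ lamA '' (B : Set A) ∧ x ≠ 0} →
         ¬ ∃ b : A, b ∈ (B : Set A) ∧ b ≠ 0 ∧
           ∃ n : ℕ, 0 < n ∧ 1 / (n : A) ≤ g / b ∧ g / b ≤ (n : A)) := by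
  letI : (LF L).Structure ℝ := LFStructure L ℝ lam
  intro A instA instF instO instS lamA hcA hopsA hMod B g hg hgne hgB
  rintro ⟨b, hbB, hbne, n, hn, hq1, hq2⟩
  letI : (LF L).Structure A := LFStructure L A lamA
  haveI : A ⊨ (LF L).completeTheory ℝ := hMod
  -- the "rfl" compatibility hypotheses for ℝ
  have hFR : ∀ {k : ℕ} (f : L.Functions k) (x : Fin k → ℝ),
      Structure.funMap (L := LF L) (Sum.inl f) x = Structure.funMap f x := fun _ _ => rfl
  have hLamR : ∀ x : Fin 1 → ℝ,
      Structure.funMap (L := LF L) (lamSymb (L := L)) x = lam (x 0) := fun _ => rfl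
  have hRelR : ∀ x : Fin 2 → ℝ,
      Structure.RelMap (L := LF L) (Sum.inl (leSymb : L.Relations 2)) x ↔
        Structure.RelMap (leSymb : L.Relations 2) x := fun _ => Iff.rfl
  -- the "rfl" compatibility hypotheses for A
  have hFA : ∀ {k : ℕ} (f : L.Functions k) (x : Fin k → A),
      Structure.funMap (L := LF L) (Sum.inl f) x = Structure.funMap f x := fun _ _ => rfl
  have hLamA : ∀ x : Fin 1 → A,
      Structure.funMap (L := LF L) (lamSymb (L := L)) x = lamA (x 0) := fun _ => rfl
  have hRelA : ∀ x : Fin 2 → A,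
      Structure.RelMap (L := LF L) (Sum.inl (leSymb : L.Relations 2)) x ↔
        Structure.RelMap (leSymb : L.Relations 2) x := fun _ => Iff.rfl
  -- transfer the λ-axioms from ℝ to A
  have transfer : ∀ σ : (LF L).Sentence, (ℝ ⊨ σ) → (A ⊨ σ) := fun σ hσ =>
    Theory.realize_sentence_of_mem ((LF L).completeTheory ℝ) (mem_completeTheory.2 hσ)
  have mono : ∀ x y : A, x ≤ y → lamA x ≤ lamA y :=
    (realize_sMono lamA hLamA hRelA hcA).1
      (transfer _ ((realize_sMono lam hLamR hRelR hcR).2 fun x y h => lam_mono h))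
  have double : ∀ x : A, lamA (x + x) = lamA x + lamA x :=
    (realize_sDouble lamA hFA hLamA hopsA).1
      (transfer _ ((realize_sDouble lam hFR hLamR hopsR).2 lam_double))
  have nonneg : ∀ x : A, 0 ≤ lamA x :=
    (realize_sNonneg lamA hFA hLamA hRelA hcA hopsA).1
      (transfer _ ((realize_sNonneg lam hFR hLamR hRelR hcR hopsR).2 lam_nonneg))
  have pos : ∀ x : A, 0 < x → lamA x ≠ 0 :=
    (realize_sPos lamA hFA hLamA hRelA hcA hopsA).1
      (transfer _ ((realize_sPos lam hFR hLamR hRelR hcR hopsR).2 fun x hx => lam_pos hx))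
  have idem : ∀ x : A, lamA x ≠ 0 → lamA (lamA x) = lamA x :=
    (realize_sIdem lamA hFA hLamA hopsA).1
      (transfer _ ((realize_sIdem lam hFR hLamR hopsR).2 fun x hx => lam_idem hx))
  have gap : ∀ x y : A, lamA x ≠ 0 → lamA y ≠ 0 → lamA x ≤ lamA y →
      lamA y ≤ lamA x + lamA x → lamA y = lamA x ∨ lamA y = lamA x + lamA x :=
    (realize_sGap lamA hFA hLamA hRelA hcA hopsA).1
      (transfer _ ((realize_sGap lam hFR hLamR hRelR hcR hopsR).2
        fun x y h1 h2 h3 h4 => lam_gap h1 h2 h3 h4))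
  -- basic positivity facts
  obtain ⟨a, ha⟩ := hg
  have hgpos : 0 < g := lt_of_le_of_ne (ha ▸ nonneg a) (Ne.symm hgne)
  have hglam : lamA g = g := by
    rw [← ha] at hgne ⊢
    exact idem a hgne
  have hnA : (0:A) < n := by exact_mod_cast hn
  have hbpos : 0 < b := by
    rcases lt_or_gt_of_ne hbne with hb | hb
    · exfalso
      have : g / b < 0 := div_neg_of_pos_of_neg hgpos hb
      have : (0:A) < 1 / n := by positivity
      linarith [hq1]
    · exact hb
  have h1 : b / n ≤ g := by
    rw [div_le_iff₀ hnA]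
    rw [one_div, inv_le_iff_one_le_mul₀ hnA] at hq1
    calc b = 1 * b := (one_mul b).symm
      _ ≤ (n : A) * (g / b) * b := by
          apply mul_le_mul_of_nonneg_right _ hbpos.le
          calc (1:A) ≤ g / b * n := by
                have := mul_le_mul_of_nonneg_right hq1 hbpos.le
                nlinarith [hq1, hnA, hbpos, div_nonneg hgpos.le hbpos.le]
            _ = (n : A) * (g / b) := by ring
      _ = (n:A) * g := by
          field_simp
      _ = g * n := by ring
  have h2 : g ≤ n * b := by
    rw [div_le_iff₀ hbpos] at hq2
    linarith
  -- apply the chain lemma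
  obtain ⟨j, hj⟩ := lam_chain lamA mono double pos gap g b hglam hgne hbpos n hn h1 h2
  -- membership facts for B
  have memB_add : ∀ x y : A, x ∈ (B : Set A) → y ∈ (B : Set A) → x + y ∈ (B : Set A) := by
    intro x y hx hy
    have := Term.realize_mem (S := (B : (LF L).Substructure A))
      (tAdd ops (Term.var 0) (Term.var 1) : (LF L).Term (Fin 2)) ![x, y]
      (by intro i; fin_cases i <;> simpa)
    rwa [realize_tAdd ops hFA hopsA] at this
  have memB_mul : ∀ x y : A, x ∈ (B : Set A) → y ∈ (B : Set A) → x * y ∈ (B : Set A) := by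
    intro x y hx hy
    have := Term.realize_mem (S := (B : (LF L).Substructure A))
      (tMul ops (Term.var 0) (Term.var 1) : (LF L).Term (Fin 2)) ![x, y]
      (by intro i; fin_cases i <;> simpa)
    rwa [realize_tMul ops hFA hopsA] at this
  have memB_lam : ∀ x : A, x ∈ (B : Set A) → lamA x ∈ (B : Set A) := by
    intro x hx
    have := Term.realize_mem (S := (B : (LF L).Substructure A))
      (tLam (Term.var 0) : (LF L).Term (Fin 1)) ![x]
      (by intro i; fin_cases i <;> simpa)
    rwa [realize_tLam lamA hLamA] at this
  -- the element 1/2 lies in B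
  have hhalfA : A ⊨ sHalf L ops := by
    rw [realize_sHalf hFA hopsA]
    exact ⟨1/2, by norm_num⟩
  have hhalfB : (B : (LF L).ElementarySubstructure A) ⊨ sHalf L ops := by
    rw [ElementarySubstructure.realize_sentence]
    exact hhalfA
  obtain ⟨e, he, hhalf⟩ : ∃ e : A, e ∈ (B : Set A) ∧ e + e = 1 := by
    rw [Sentence.Realize, sHalf, Formula.realize_iExs] at hhalfB
    obtain ⟨i, hi⟩ := hhalfB
    have := (B.subtype.map_formula
      (Term.equal (tAdd ops (Term.var 0) (Term.var 0)) (tOne ops) : (LF L).Formula (Fin 1))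
      (fun a => i a)).2 (by rw [Formula.realize_relabel, Sum.elim_comp_inr] at hi; exact hi)
    rw [Formula.realize_equal, realize_tAdd ops hFA hopsA, realize_tOne ops hFA hopsA] at this
    exact ⟨(i 0 : A), (i 0).2, by simpa using this⟩
  -- b * 2 ^ j ∈ B for every integer j
  have memB_c : ∀ j : ℤ, b * 2 ^ j ∈ (B : Set A) := by
    intro j
    induction j using Int.induction_on with
    | zero => simpa using hbB
    | succ k ih =>
      have e : b * 2 ^ ((k : ℤ) + 1) = b * 2 ^ (k : ℤ) + b * 2 ^ (k : ℤ) := by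
        rw [zpow_add_one₀ (by norm_num : (2:A) ≠ 0)]; ring
      rw [e]
      exact memB_add _ _ ih ih
    | pred k ih =>
      have he2 : e = 2⁻¹ := by
        field_simp
        linarith [hhalf]
      have ee : b * 2 ^ (-(k : ℤ) - 1) = (b * 2 ^ (-(k : ℤ))) * e := by
        rw [he2, zpow_sub_one₀ (by norm_num : (2:A) ≠ 0)]
        ring
      rw [ee]
      exact memB_mul _ _ ih he
  -- contradiction
  exact hgB ⟨⟨b * 2 ^ j, memB_c j, hj.symm⟩, hgne⟩

end PaperDep
end
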